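/- arXiv:2601.03616 — 6 statements merged into one kernel-verified Lean document; each statement's English description precedes it below -/
import Mathlib

section
/- Let n be a positive integer, let A be an n×n complex Hermitian positive semidefinite matrix, let u₀, f ∈ ℂⁿ, and let T > 0. Suppose w : ℝ → ℂⁿ is twice differentiable with w''(s) = −A·w(s) + f for all s ∈ ℝ, w(0) = u₀, and w'(0) = 0. Then the Duhamel solution u(T) := exp(−T·A)·u₀ + ∫₀ᵀ exp(−(T−s)·A)·f ds of the system du/dt = −A·u + f, u(0) = u₀, satisfies the Kannai transmutation identity u(T) = ∫_ℝ κ_T(s)·w(s) ds. -/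
open MeasureTheory Real Matrix
open scoped ComplexOrder

noncomputable def κ (T : ℝ) (s : ℝ) : ℝ :=
  (Real.sqrt (4 * Real.pi * T))⁻¹ * Real.exp (-s ^ 2 / (4 * T))

section GaussianLemmas

open Filter

lemma kappa_rep (T : ℝ) (hT : 0 < T) (μ : ℝ) (s : ℝ) :
    ((κ T s : ℝ) : ℂ) * Complex.cos (μ * s) =
      ((2 * (Real.sqrt (4 * Real.pi * T) : ℂ))⁻¹) *
        (Complex.exp ((-(1/(4*T)) : ℂ) * s ^ 2 + (μ * Complex.I) * s + 0)
          + Complex.exp ((-(1/(4*T)) : ℂ) * s ^ 2 + (-(μ * Complex.I)) * s + 0)) := by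
  have hTc : (T : ℂ) ≠ 0 := by exact_mod_cast ne_of_gt hT
  rw [Complex.cos, κ]
  push_cast
  have h1 : (-(1/(4*T)) : ℂ) * s ^ 2 + (μ * Complex.I) * s + 0
      = -(s:ℂ)^2/(4*T) + (μ:ℂ)*s*Complex.I := by field_simp; ring
  have h2 : (-(1/(4*T)) : ℂ) * s ^ 2 + (-(μ * Complex.I)) * s + 0
      = -(s:ℂ)^2/(4*T) + (-((μ:ℂ)*s))*Complex.I := by field_simp; ring
  rw [h1, h2, Complex.exp_add, Complex.exp_add]
  ring

lemma integrable_kappa_cos (T : ℝ) (hT : 0 < T) (μ : ℝ) :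
    Integrable (fun s : ℝ => ((κ T s : ℝ) : ℂ) * Complex.cos (μ * s)) := by
  have hb : (-(1/(4*T)) : ℂ).re < 0 := by
    simp [Complex.div_re]
    positivity
  simp only [kappa_rep T hT μ]
  exact (((integrable_cexp_quadratic' hb (μ * Complex.I) 0).add
    (integrable_cexp_quadratic' hb (-(μ * Complex.I)) 0)).const_mul _)

lemma integral_kappa_cos (T : ℝ) (hT : 0 < T) (μ : ℝ) :
    ∫ s : ℝ, ((κ T s : ℝ) : ℂ) * Complex.cos (μ * s) = Complex.exp (-(μ ^ 2 * T)) := by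
  have hb : (-(1/(4*T)) : ℂ).re < 0 := by
    simp [Complex.div_re]
    positivity
  have hTc : (T : ℂ) ≠ 0 := by exact_mod_cast ne_of_gt hT
  have h4T : (0:ℝ) < 4 * Real.pi * T := by positivity
  simp only [kappa_rep T hT μ]
  rw [integral_const_mul, integral_add (integrable_cexp_quadratic' hb _ 0)
    (integrable_cexp_quadratic' hb _ 0),
    integral_cexp_quadratic hb, integral_cexp_quadratic hb]
  have hpow : ((Real.pi : ℂ) / -(-(1/(4*T)) : ℂ)) ^ (1/2 : ℂ) = (Real.sqrt (4 * Real.pi * T) : ℂ) := by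
    have h1 : ((Real.pi : ℂ) / -(-(1/(4*T)) : ℂ)) = ((4 * Real.pi * T : ℝ) : ℂ) := by
      push_cast
      field_simp
    rw [h1, show (1/2 : ℂ) = ((1/2 : ℝ) : ℂ) by norm_num,
      ← Complex.ofReal_cpow h4T.le, Real.sqrt_eq_rpow]
  rw [hpow]
  have hI : ((μ:ℂ) * Complex.I) ^ 2 = -((μ:ℂ)^2) := by
    rw [mul_pow, Complex.I_sq]; ring
  have hsq : Complex.exp (0 - (μ * Complex.I) ^ 2 / (4 * (-(1/(4*T)) : ℂ)))
      = Complex.exp (-((μ:ℂ) ^ 2 * T)) := by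
    congr 1
    rw [hI]
    field_simp
    ring
  have hsq2 : Complex.exp (0 - (-((μ:ℂ) * Complex.I)) ^ 2 / (4 * (-(1/(4*T)) : ℂ)))
      = Complex.exp (-((μ:ℂ) ^ 2 * T)) := by
    rw [neg_pow, hI]; rw [← hsq, hI]; norm_num
  rw [hsq, hsq2, ← two_mul]
  have hne : (Real.sqrt (4 * Real.pi * T) : ℂ) ≠ 0 := by
    exact_mod_cast Real.sqrt_ne_zero'.mpr h4T
  rw [show ((2:ℂ) * (Real.sqrt (4*Real.pi*T):ℂ))⁻¹ *
      (2 * ((Real.sqrt (4*Real.pi*T):ℂ) * Complex.exp (-((μ:ℂ)^2*T))))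
      = (((2:ℂ) * (Real.sqrt (4*Real.pi*T):ℂ))⁻¹ * (2 * (Real.sqrt (4*Real.pi*T):ℂ)))
        * Complex.exp (-((μ:ℂ)^2*T)) by ring,
    inv_mul_cancel₀ (mul_ne_zero two_ne_zero hne), one_mul]

lemma integrable_sq_gaussian {b : ℝ} (hb : 0 < b) :
    Integrable (fun x : ℝ => x ^ 2 * Real.exp (-b * x ^ 2)) := by
  have h := integrable_rpow_mul_exp_neg_mul_sq hb (s := 2) (by norm_num)
  convert h using 2 with x
  rw [show ((2:ℝ)) = ((2:ℕ):ℝ) by norm_num, Real.rpow_natCast]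

lemma integral_sq_gaussian {b : ℝ} (hb : 0 < b) :
    ∫ x : ℝ, x ^ 2 * Real.exp (-b * x ^ 2) = Real.sqrt (π / b) / (2 * b) := by
  set g : ℝ → ℝ := fun x => x ^ 2 * Real.exp (-b * x ^ 2) with hg
  have hint2 : Integrable g := integrable_sq_gaussian hb
  have hint1 : Integrable (fun x : ℝ => Real.exp (-b * x ^ 2)) := integrable_exp_neg_mul_sq hb
  have hD : ∀ x : ℝ, HasDerivAt (fun x : ℝ => x * Real.exp (-b * x ^ 2))
      (Real.exp (-b * x ^ 2) - 2 * b * g x) x := by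
    intro x
    have hinner : HasDerivAt (fun x : ℝ => -b * x ^ 2) (-b * (2 * x ^ 1)) x :=
      (hasDerivAt_pow 2 x).const_mul (-b)
    have hexp := hinner.exp
    have := (hasDerivAt_id x).mul hexp
    exact this.congr_deriv (by simp only [hg, id]; ring)
  have htend : Tendsto (fun x : ℝ => x * Real.exp (-b * x ^ 2)) atTop (nhds 0) := by
    have h := rpow_mul_exp_neg_mul_sq_isLittleO_exp_neg hb 1
    have h2 : Tendsto (fun x : ℝ => x ^ (1:ℝ) * Real.exp (-b * x ^ 2)) atTop (nhds 0) :=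
      h.isBigO.trans_tendsto (Real.tendsto_exp_atBot.comp (by
        have h1 : Filter.Tendsto (fun x:ℝ => (1/2)*x) atTop atTop :=
          Filter.Tendsto.const_mul_atTop (by norm_num) tendsto_id
        have h2 := tendsto_neg_atTop_atBot.comp h1
        have : (Neg.neg ∘ fun x:ℝ => (1/2)*x) = fun x:ℝ => -(1/2)*x := by
          funext x; simp [neg_mul]
        rwa [this] at h2))
    simpa [Real.rpow_one] using h2
  have hFTC : ∫ x in Set.Ioi (0:ℝ), (Real.exp (-b * x ^ 2) - 2 * b * g x) = 0 := by
    have := integral_Ioi_of_hasDerivAt_of_tendsto' (a := 0)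
      (fun x _ => hD x)
      ((hint1.sub ((hint2.const_mul (2*b)))).integrableOn) htend
    simpa using this
  have hsub : ∫ x in Set.Ioi (0:ℝ), (Real.exp (-b * x ^ 2) - 2 * b * g x)
      = (∫ x in Set.Ioi (0:ℝ), Real.exp (-b * x ^ 2)) - 2 * b * ∫ x in Set.Ioi (0:ℝ), g x := by
    rw [integral_sub hint1.integrableOn ((hint2.const_mul (2*b)).integrableOn)]
    rw [integral_const_mul]
  have hIoi : ∫ x in Set.Ioi (0:ℝ), g x = Real.sqrt (π / b) / (4 * b) := by
    have hgauss : ∫ x in Set.Ioi (0:ℝ), Real.exp (-b * x ^ 2) = Real.sqrt (π / b) / 2 :=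
      integral_gaussian_Ioi b
    have h0 : (∫ x in Set.Ioi (0:ℝ), Real.exp (-b * x ^ 2)) - 2 * b * ∫ x in Set.Ioi (0:ℝ), g x = 0 := by
      rw [← hsub]; exact hFTC
    rw [hgauss] at h0
    field_simp at h0 ⊢
    linarith
  have heven : ∫ x : ℝ, g x = 2 * ∫ x in Set.Ioi (0:ℝ), g x := by
    rw [← integral_comp_abs (f := g)]
    congr 1 with x
    simp [hg, sq_abs]
  rw [heven, hIoi]
  field_simp
  ring

lemma kappa_sq_eq (T : ℝ) (s : ℝ) :
    κ T s * s ^ 2 = (Real.sqrt (4 * Real.pi * T))⁻¹ * (s ^ 2 * Real.exp (-(1/(4*T)) * s ^ 2)) := by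
  have : -s^2/(4*T) = -(1/(4*T)) * s^2 := by ring
  rw [κ, this]; ring

lemma integrable_kappa_sq (T : ℝ) (hT : 0 < T) :
    Integrable (fun s : ℝ => κ T s * s ^ 2) := by
  have hb : (0:ℝ) < 1/(4*T) := by positivity
  simp only [kappa_sq_eq T]
  exact (integrable_sq_gaussian hb).const_mul _

lemma integral_kappa_sq (T : ℝ) (hT : 0 < T) :
    ∫ s : ℝ, κ T s * s ^ 2 = 2 * T := by
  have hb : (0:ℝ) < 1/(4*T) := by positivity
  have h4T : (0:ℝ) < 4 * Real.pi * T := by positivity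
  simp only [kappa_sq_eq T]
  rw [integral_const_mul, integral_sq_gaussian hb]
  rw [show Real.pi / (1/(4*T)) = 4 * Real.pi * T by field_simp]
  have hne : Real.sqrt (4 * Real.pi * T) ≠ 0 := ne_of_gt (Real.sqrt_pos.mpr h4T)
  field_simp
  ring

lemma integrable_kappa_c (T : ℝ) (hT : 0 < T) :
    Integrable (fun s : ℝ => ((κ T s : ℝ) : ℂ)) := by
  have h := integrable_kappa_cos T hT 0
  simpa using h

lemma integral_kappa_one (T : ℝ) (hT : 0 < T) :
    ∫ s : ℝ, ((κ T s : ℝ) : ℂ) = 1 := by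
  have h := integral_kappa_cos T hT 0
  simpa using h

lemma integrable_kappa_sq_c (T : ℝ) (hT : 0 < T) :
    Integrable (fun s : ℝ => ((κ T s : ℝ) : ℂ) * ((s:ℂ)^2/2)) := by
  have h : Integrable (fun s : ℝ => (((1/2 * (κ T s * s ^ 2) : ℝ)) : ℂ)) :=
    Integrable.ofReal ((integrable_kappa_sq T hT).const_mul (1/2 : ℝ))
  apply h.congr
  filter_upwards with s
  push_cast
  ring

lemma integral_kappa_sq_c (T : ℝ) (hT : 0 < T) :
    ∫ s : ℝ, ((κ T s : ℝ) : ℂ) * ((s:ℂ)^2/2) = (T:ℂ) := by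
  have h : ∀ s : ℝ, ((κ T s : ℝ) : ℂ) * ((s:ℂ)^2/2) = (((1/2 * (κ T s * s^2) : ℝ)) : ℂ) := by
    intro s; push_cast; ring
  simp only [h]
  have h2 : ∫ s : ℝ, (((1/2 * (κ T s * s ^ 2) : ℝ)) : ℂ)
      = (((∫ s : ℝ, 1/2 * (κ T s * s ^ 2) : ℝ)) : ℂ) := integral_ofReal
  rw [h2, integral_const_mul, integral_kappa_sq T hT]
  push_cast
  ring

lemma duhamel_scalar (T : ℝ) (ν : ℝ) :
    ∫ s in (0:ℝ)..T, Complex.exp (-(((T - s : ℝ)):ℂ) * ν)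
      = if ν = 0 then (T:ℂ) else (1 - Complex.exp (-(ν:ℂ) * T))/ν := by
  by_cases hν : ν = 0
  · simp [hν]
  · have hνc : (ν:ℂ) ≠ 0 := by exact_mod_cast hν
    have hrw : ∀ s : ℝ, Complex.exp (-(((T - s : ℝ)):ℂ) * ν)
        = Complex.exp (-((T:ℂ)*ν)) * Complex.exp ((ν:ℂ) * s) := by
      intro s; rw [← Complex.exp_add]; congr 1; push_cast; ring
    simp only [hrw, if_neg hν]
    rw [intervalIntegral.integral_const_mul, integral_exp_mul_complex hνc]
    rw [show ((ν:ℂ) * (0:ℝ)) = 0 by push_cast; ring, Complex.exp_zero]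
    have h1 : Complex.exp (-((T:ℂ)*ν)) * Complex.exp ((ν:ℂ)*T) = 1 := by
      rw [← Complex.exp_add, show -((T:ℂ)*ν) + (ν:ℂ)*T = 0 by ring, Complex.exp_zero]
    field_simp
    rw [mul_comm (ν:ℂ) (T:ℂ)] at h1
    rw [mul_sub, h1, mul_one]

end GaussianLemmas

section ODELemmas

lemma ode_unique_real (ν : ℝ) (hν : 0 ≤ ν) (p : ℝ → ℝ)
    (hd : Differentiable ℝ p) (hd' : Differentiable ℝ (deriv p))
    (hdd : ∀ s, deriv (deriv p) s = -ν * p s)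
    (h0 : p 0 = 0) (h'0 : deriv p 0 = 0) : ∀ s, p s = 0 := by
  set F : ℝ → ℝ := fun s => (deriv p s) ^ 2 + ν * (p s) ^ 2 with hF
  have hFd : ∀ s, HasDerivAt F 0 s := by
    intro s
    have h1 : HasDerivAt (fun t => (deriv p t) ^ 2)
        (2 * (deriv p s) ^ 1 * deriv (deriv p) s) s := (hd' s).hasDerivAt.pow 2
    have h2 : HasDerivAt (fun t => ν * (p t) ^ 2)
        (ν * (2 * (p s) ^ 1 * deriv p s)) s := (((hd s).hasDerivAt.pow 2)).const_mul ν
    have := h1.add h2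
    exact this.congr_deriv (by rw [hdd s]; ring)
  have hFconst : ∀ s, F s = F 0 :=
    fun s => is_const_of_deriv_eq_zero (fun t => (hFd t).differentiableAt)
      (fun t => (hFd t).deriv) s 0
  have hF0 : F 0 = 0 := by simp [hF, h0, h'0]
  have hp' : ∀ s, deriv p s = 0 := by
    intro s
    have hs := (hFconst s).trans hF0
    have h1 : (0:ℝ) ≤ (deriv p s) ^ 2 := sq_nonneg _
    have h2 : (0:ℝ) ≤ ν * (p s) ^ 2 := mul_nonneg hν (sq_nonneg _)
    have : (deriv p s) ^ 2 = 0 := by simp only [hF] at hs; nlinarith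
    exact pow_eq_zero_iff (by norm_num) |>.mp this
  intro s
  have := is_const_of_deriv_eq_zero hd hp' s 0
  rw [this, h0]

lemma ode_unique_complex (ν : ℝ) (hν : 0 ≤ ν) (h : ℝ → ℂ)
    (hd : Differentiable ℝ h) (hd' : Differentiable ℝ (deriv h))
    (hdd : ∀ s, deriv (deriv h) s = -(ν:ℂ) * h s)
    (h0 : h 0 = 0) (h'0 : deriv h 0 = 0) : ∀ s, h s = 0 := by
  have key : ∀ L : ℂ →L[ℝ] ℝ, ∀ s, L (h s) = 0 := by
    intro L
    have hld : ∀ (g : ℝ → ℂ), Differentiable ℝ g → ∀ s,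
        HasDerivAt (fun t => L (g t)) (L (deriv g s)) s := fun g hg s =>
      L.hasFDerivAt.comp_hasDerivAt s (hg s).hasDerivAt
    have hder : deriv (fun t => L (h t)) = fun s => L (deriv h s) := by
      funext s; exact (hld h hd s).deriv
    apply ode_unique_real ν hν (fun t => L (h t))
    · exact fun s => (hld h hd s).differentiableAt
    · rw [hder]; exact fun s => (hld _ hd' s).differentiableAt
    · intro s
      rw [hder, (hld _ hd' s).deriv, hdd s]
      have : -(ν:ℂ) * h s = ν • (-(h s)) := by
        simp [Complex.real_smul]
      rw [this, L.map_smul, map_neg]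
      simp [smul_eq_mul]
    · simp [h0]
    · rw [hder]; simp [h'0]
  intro s
  have hre := key Complex.reCLM s
  have him := key Complex.imCLM s
  exact Complex.ext hre him

lemma hasDerivAt_ccos (μ : ℝ) (s : ℝ) :
    HasDerivAt (fun t : ℝ => Complex.cos (μ * t)) (-((μ:ℂ) * Complex.sin (μ * s))) s := by
  have h1 : HasDerivAt (fun z : ℂ => Complex.cos ((μ:ℂ) * z))
      (-Complex.sin ((μ:ℂ) * s) * ((μ:ℂ) * 1)) (s:ℂ) :=
    (Complex.hasDerivAt_cos _).comp _ ((hasDerivAt_id _).const_mul _)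
  have h2 := h1.comp_ofReal
  convert h2 using 1
  ring

lemma hasDerivAt_csin (μ : ℝ) (s : ℝ) :
    HasDerivAt (fun t : ℝ => Complex.sin (μ * t)) ((μ:ℂ) * Complex.cos (μ * s)) s := by
  have h1 : HasDerivAt (fun z : ℂ => Complex.sin ((μ:ℂ) * z))
      (Complex.cos ((μ:ℂ) * s) * ((μ:ℂ) * 1)) (s:ℂ) :=
    (Complex.hasDerivAt_sin _).comp _ ((hasDerivAt_id _).const_mul _)
  have h2 := h1.comp_ofReal
  convert h2 using 1
  ring

lemma ode_solve_pos (ν : ℝ) (hν : 0 < ν) (a c : ℂ) (g : ℝ → ℂ)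
    (hd : Differentiable ℝ g) (hd' : Differentiable ℝ (deriv g))
    (hdd : ∀ s, deriv (deriv g) s = -(ν:ℂ) * g s + c)
    (hg0 : g 0 = a) (hg'0 : deriv g 0 = 0) :
    ∀ s : ℝ, g s = a * Complex.cos ((Real.sqrt ν : ℝ) * s)
      + (c/(ν:ℂ)) * (1 - Complex.cos ((Real.sqrt ν : ℝ) * s)) := by
  set μ : ℝ := Real.sqrt ν with hμ
  have hνc : ((ν:ℝ):ℂ) ≠ 0 := by exact_mod_cast ne_of_gt hν
  have hμsq : ((μ:ℂ))^2 = (ν:ℂ) := by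
    rw [hμ]; exact_mod_cast Real.sq_sqrt hν.le
  set K : ℂ := a - c/(ν:ℂ) with hK
  set E : ℝ → ℂ := fun s => K * Complex.cos ((μ:ℂ) * s) + c/(ν:ℂ) with hE
  have hEd : ∀ s : ℝ, HasDerivAt E (K * (-((μ:ℂ) * Complex.sin (μ * s)))) s := by
    intro s
    exact ((hasDerivAt_ccos μ s).const_mul K).add_const _
  have hEdiff : Differentiable ℝ E := fun s => (hEd s).differentiableAt
  have hEder : deriv E = fun s : ℝ => K * (-((μ:ℂ) * Complex.sin (μ * s))) := by
    funext s; exact (hEd s).deriv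
  have hEd2 : ∀ s, HasDerivAt (deriv E) (-(ν:ℂ) * E s + c) s := by
    intro s
    rw [hEder]
    have h1 : HasDerivAt (fun t : ℝ => K * (-((μ:ℂ) * Complex.sin (μ * t))))
        (K * (-((μ:ℂ) * ((μ:ℂ) * Complex.cos (μ * s))))) s := by
      exact (((hasDerivAt_csin μ s).const_mul (μ:ℂ)).neg).const_mul K
    convert h1 using 1
    have : -(ν:ℂ) * E s + c = -((μ:ℂ)^2) * (K * Complex.cos ((μ:ℂ) * s)) := by
      rw [hE, hμsq]
      simp only []
      field_simp
      ring
    rw [this]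
    ring
  have hEdiff' : Differentiable ℝ (deriv E) := fun s => (hEd2 s).differentiableAt
  have hEder2 : ∀ s, deriv (deriv E) s = -(ν:ℂ) * E s + c := fun s => (hEd2 s).deriv
  set h : ℝ → ℂ := fun s => g s - E s with hh
  have hhd : Differentiable ℝ h := hd.sub hEdiff
  have hhder : deriv h = fun s => deriv g s - deriv E s := by
    funext s; exact (deriv_sub (hd s) (hEdiff s))
  have hhd' : Differentiable ℝ (deriv h) := by
    rw [hhder]; exact hd'.sub hEdiff'
  have hzero : ∀ s, h s = 0 := by
    apply ode_unique_complex ν hν.le h hhd hhd'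
    · intro s
      rw [hhder, deriv_fun_sub (hd' s) (hEdiff' s), hdd s, hEder2 s]
      simp only [hh]
      ring
    · simp only [hh, hE, hg0]
      simp [Complex.cos_zero]
      rw [hK]; ring
    · rw [hhder]
      show deriv g 0 - deriv E 0 = 0
      rw [hg'0, hEder]
      simp
  intro s
  have := hzero s
  have hgE : g s = E s := by
    have := sub_eq_zero.mp this
    exact this
  rw [hgE, hE]
  simp only []
  push_cast
  rw [hK]
  ring

lemma ode_solve_zero (a c : ℂ) (g : ℝ → ℂ)
    (hd : Differentiable ℝ g) (hd' : Differentiable ℝ (deriv g))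
    (hdd : ∀ s, deriv (deriv g) s = -((0:ℝ):ℂ) * g s + c)
    (hg0 : g 0 = a) (hg'0 : deriv g 0 = 0) :
    ∀ s : ℝ, g s = a + c * ((s:ℂ)^2/2) := by
  set E : ℝ → ℂ := fun s => a + c * ((s:ℂ)^2/2) with hE
  have hEd : ∀ s : ℝ, HasDerivAt E (c * s) s := by
    intro s
    have h1 : HasDerivAt (fun t : ℝ => ((t:ℂ))^2) (2*(s:ℂ)) s := by
      have := (hasDerivAt_pow 2 ((s:ℝ):ℂ)).comp_ofReal
      convert this using 1
      push_cast; ring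
    have := ((h1.div_const 2).const_mul c).const_add a
    exact this.congr_deriv (by ring)
  have hEdiff : Differentiable ℝ E := fun s => (hEd s).differentiableAt
  have hEder : deriv E = fun s : ℝ => c * s := by funext s; exact (hEd s).deriv
  have hEd2 : ∀ s : ℝ, HasDerivAt (deriv E) c s := by
    intro s
    rw [hEder]
    have h1 : HasDerivAt (fun t : ℝ => ((t:ℂ))) 1 s := Complex.ofRealCLM.hasDerivAt
    have := h1.const_mul c
    exact this.congr_deriv (by ring)
  have hEdiff' : Differentiable ℝ (deriv E) := fun s => (hEd2 s).differentiableAt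
  have hEder2 : ∀ s, deriv (deriv E) s = c := fun s => (hEd2 s).deriv
  set h : ℝ → ℂ := fun s => g s - E s with hh
  have hhd : Differentiable ℝ h := hd.sub hEdiff
  have hhder : deriv h = fun s => deriv g s - deriv E s := by
    funext s; exact (deriv_sub (hd s) (hEdiff s))
  have hhd' : Differentiable ℝ (deriv h) := by
    rw [hhder]; exact hd'.sub hEdiff'
  have hzero : ∀ s, h s = 0 := by
    apply ode_unique_complex 0 le_rfl h hhd hhd'
    · intro s
      rw [hhder, deriv_fun_sub (hd' s) (hEdiff' s), hdd s, hEder2 s]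
      simp only [hh]
      push_cast
      ring
    · simp [hh, hE, hg0]
    · rw [hhder]
      show deriv g 0 - deriv E 0 = 0
      rw [hg'0, hEder]
      simp
  intro s
  exact sub_eq_zero.mp (hzero s)

end ODELemmas

section MatrixLemmas

variable {n : ℕ} {A : Matrix (Fin n) (Fin n) ℂ} (hA : A.IsHermitian)

noncomputable def evec (i : Fin n) : Fin n → ℂ := ⇑(hA.eigenvectorBasis i)

lemma exp_eigen (t : ℂ) (i : Fin n) :
    (NormedSpace.exp (t • A)).mulVec (evec hA i) =
      Complex.exp (t * hA.eigenvalues i) • evec hA i := by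
  classical
  set U : Matrix (Fin n) (Fin n) ℂ := (hA.eigenvectorUnitary : Matrix (Fin n) (Fin n) ℂ) with hU
  have h1 : star U * U = 1 := Unitary.coe_star_mul_self hA.eigenvectorUnitary
  have h2 : U * star U = 1 := Unitary.coe_mul_star_self hA.eigenvectorUnitary
  have hdecomp : t • A = U * (Matrix.diagonal fun j => t * (hA.eigenvalues j : ℂ)) * star U := by
    conv_lhs => rw [hA.spectral_theorem, Unitary.conjStarAlgAut_apply]
    rw [← smul_mul_assoc, ← mul_smul_comm]
    congr 2
    rw [← Matrix.diagonal_smul]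
    congr 1
  have hexp : NormedSpace.exp (t • A) =
      U * (Matrix.diagonal fun j => Complex.exp (t * (hA.eigenvalues j : ℂ))) * star U := by
    rw [hdecomp]
    have := Matrix.exp_units_conj (⟨U, star U, h2, h1⟩ : (Matrix (Fin n) (Fin n) ℂ)ˣ)
      (Matrix.diagonal fun j => t * (hA.eigenvalues j : ℂ))
    rw [show ((⟨U, star U, h2, h1⟩ : (Matrix (Fin n) (Fin n) ℂ)ˣ) : Matrix (Fin n) (Fin n) ℂ) = U from rfl,
      show Units.val ((⟨U, star U, h2, h1⟩ : (Matrix (Fin n) (Fin n) ℂ)ˣ)⁻¹) = star U from rfl] at this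
    rw [this, Matrix.exp_diagonal, Pi.exp_def]
    congr 2
    funext j
    rw [← Complex.exp_eq_exp_ℂ]
  rw [hexp]
  rw [← Matrix.mulVec_mulVec, ← Matrix.mulVec_mulVec]
  rw [show (evec hA i) = ⇑(hA.eigenvectorBasis i) from rfl]
  rw [hA.star_eigenvectorUnitary_mulVec i]
  rw [Matrix.diagonal_mulVec_single]
  have hsingle : Pi.single (M := fun _ : Fin n => ℂ) i (Complex.exp (t * (hA.eigenvalues i : ℂ)) * 1)
      = Complex.exp (t * (hA.eigenvalues i : ℂ)) • (Pi.single i 1 : Fin n → ℂ) := by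
    funext j
    by_cases h : j = i
    · subst h; simp
    · simp [Pi.single_eq_of_ne h]
  rw [hsingle, Matrix.mulVec_smul, hA.eigenvectorUnitary_mulVec]

lemma decomp_vec (x : Fin n → ℂ) :
    x = ∑ i, (dotProduct (star (evec hA i)) x) • evec hA i := by
  classical
  have h := hA.eigenvectorBasis.sum_repr ((WithLp.equiv 2 (Fin n → ℂ)).symm x)
  have h2 : ∀ i, hA.eigenvectorBasis.repr ((WithLp.equiv 2 (Fin n → ℂ)).symm x) i
      = dotProduct (star (evec hA i)) x := by
    intro i
    rw [OrthonormalBasis.repr_apply_apply]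
    rw [PiLp.inner_apply]
    simp [dotProduct, evec, RCLike.inner_apply, mul_comm]
  nth_rewrite 1 [show x = WithLp.equiv 2 (Fin n → ℂ) ((WithLp.equiv 2 (Fin n → ℂ)).symm x) from rfl]
  rw [← h]
  simp only [h2]
  simp [evec, WithLp.ofLp_sum, WithLp.ofLp_smul]

end MatrixLemmas

/-- Kannai transmutation identity: the Duhamel solution of
`du/dt = -A u + f`, `u(0) = u₀` at time `T` is the Gaussian average of the
wave-type solution `w'' = -A w + f`, `w(0) = u₀`, `w'(0) = 0`. -/
theorem kannai_transmutation_inhom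
    (n : ℕ) (hn : 0 < n)
    (A : Matrix (Fin n) (Fin n) ℂ) (hA : A.PosSemidef)
    (u₀ f : Fin n → ℂ) (T : ℝ) (hT : 0 < T)
    (w : ℝ → Fin n → ℂ)
    (hw : Differentiable ℝ w)
    (hw' : Differentiable ℝ (deriv w))
    (hw'' : ∀ s : ℝ, deriv (deriv w) s = -(A.mulVec (w s)) + f)
    (hw0 : w 0 = u₀) (hw'0 : deriv w 0 = 0) :
    (NormedSpace.exp (-(T : ℂ) • A)).mulVec u₀ +
        ∫ s in (0 : ℝ)..T, (NormedSpace.exp (-((T - s : ℝ) : ℂ) • A)).mulVec f =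
      ∫ s : ℝ, ((Real.sqrt (4 * Real.pi * T))⁻¹ * Real.exp (-s ^ 2 / (4 * T))) • w s := by
  classical
  have hAH : A.IsHermitian := hA.1
  have hν : ∀ i, 0 ≤ hAH.eigenvalues i := fun i => hA.eigenvalues_nonneg i
  -- coordinate functions
  set g : Fin n → ℝ → ℂ := fun i s => dotProduct (star (evec hAH i)) (w s) with hgdef
  have hdot : ∀ (y : Fin n → ℂ) (u : ℝ → Fin n → ℂ), Differentiable ℝ u → ∀ s : ℝ,
      HasDerivAt (fun t => dotProduct y (u t)) (dotProduct y (deriv u s)) s := by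
    intro y u hu s
    have hco : ∀ j : Fin n, HasDerivAt (fun t => u t j) (deriv u s j) s := fun j =>
      (ContinuousLinearMap.proj (R := ℝ) (φ := fun _ : Fin n => ℂ) j).hasFDerivAt.comp_hasDerivAt
        s (hu s).hasDerivAt
    have hsum : HasDerivAt (fun t => ∑ j, y j * u t j) (∑ j, y j * deriv u s j) s :=
      HasDerivAt.fun_sum (fun j _ => (hco j).const_mul (y j))
    simpa [dotProduct] using hsum
  have heig : ∀ i, A *ᵥ evec hAH i = ((hAH.eigenvalues i : ℝ):ℂ) • evec hAH i := by
    intro i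
    have h2 : A *ᵥ evec hAH i = hAH.eigenvalues i • evec hAH i := hAH.mulVec_eigenvectorBasis i
    rw [h2]
    funext j
    simp [Complex.real_smul]
  have hvmul : ∀ i, star (evec hAH i) ᵥ* A = ((hAH.eigenvalues i : ℝ):ℂ) • star (evec hAH i) := by
    intro i
    have h1 : star (A *ᵥ evec hAH i) = star (evec hAH i) ᵥ* Aᴴ :=
      Matrix.star_mulVec A (evec hAH i)
    rw [hAH.eq] at h1
    rw [← h1, heig i, star_smul]
    congr 1
    simp [Complex.star_def, Complex.conj_ofReal]
  have hg_d : ∀ i s, HasDerivAt (g i) (dotProduct (star (evec hAH i)) (deriv w s)) s :=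
    fun i s => hdot _ w hw s
  have hg_diff : ∀ i, Differentiable ℝ (g i) := fun i s => (hg_d i s).differentiableAt
  have hg_der : ∀ i, deriv (g i) = fun s => dotProduct (star (evec hAH i)) (deriv w s) :=
    fun i => funext fun s => (hg_d i s).deriv
  have hg_d2 : ∀ i s, HasDerivAt (deriv (g i))
      (dotProduct (star (evec hAH i)) (deriv (deriv w) s)) s := by
    intro i s; rw [hg_der i]; exact hdot _ (deriv w) hw' s
  have hg_diff' : ∀ i, Differentiable ℝ (deriv (g i)) := fun i s => (hg_d2 i s).differentiableAt
  have hg_dd : ∀ i s, deriv (deriv (g i)) s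
      = -((hAH.eigenvalues i : ℝ):ℂ) * g i s + dotProduct (star (evec hAH i)) f := by
    intro i s
    rw [(hg_d2 i s).deriv, hw'' s, dotProduct_add, dotProduct_neg]
    rw [dotProduct_mulVec, hvmul i, smul_dotProduct]
    simp [hgdef, smul_eq_mul]
  have hg0 : ∀ i, g i 0 = dotProduct (star (evec hAH i)) u₀ := by
    intro i; simp only [hgdef, hw0]
  have hg'0 : ∀ i, deriv (g i) 0 = 0 := by
    intro i
    rw [hg_der i]
    show dotProduct (star (evec hAH i)) (deriv w 0) = 0
    rw [hw'0, dotProduct_zero]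
  -- key scalar computation per eigenvalue
  have key : ∀ i : Fin n,
      Integrable (fun s : ℝ => ((κ T s : ℝ):ℂ) * g i s) ∧
      (∫ s : ℝ, ((κ T s : ℝ):ℂ) * g i s)
        = (dotProduct (star (evec hAH i)) u₀)
            * Complex.exp (-((hAH.eigenvalues i : ℝ):ℂ) * T)
          + (dotProduct (star (evec hAH i)) f)
            * (∫ s in (0:ℝ)..T, Complex.exp (-(((T - s : ℝ)):ℂ) * (hAH.eigenvalues i))) := by
    intro i
    rw [duhamel_scalar T (hAH.eigenvalues i)]
    rcases eq_or_lt_of_le (hν i) with h0 | hpos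
    · -- zero eigenvalue
      have h0' : hAH.eigenvalues i = 0 := h0.symm
      have hsol := ode_solve_zero (dotProduct (star (evec hAH i)) u₀)
        (dotProduct (star (evec hAH i)) f) (g i) (hg_diff i) (hg_diff' i)
        (by intro s; rw [hg_dd i s, h0']) (hg0 i) (hg'0 i)
      have hfun : (fun s : ℝ => ((κ T s : ℝ):ℂ) * g i s)
          = fun s : ℝ => (dotProduct (star (evec hAH i)) u₀) * ((κ T s : ℝ):ℂ)
            + (dotProduct (star (evec hAH i)) f) * (((κ T s : ℝ):ℂ) * ((s:ℂ)^2/2)) := by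
        funext s; rw [hsol s]; ring
      constructor
      · rw [hfun]
        exact ((integrable_kappa_c T hT).const_mul _).add
          ((integrable_kappa_sq_c T hT).const_mul _)
      · rw [hfun, integral_add (((integrable_kappa_c T hT).const_mul _))
          (((integrable_kappa_sq_c T hT).const_mul _)), integral_const_mul, integral_const_mul,
          integral_kappa_one T hT, integral_kappa_sq_c T hT]
        rw [h0']
        simp
    · -- positive eigenvalue
      have hνc : ((hAH.eigenvalues i : ℝ):ℂ) ≠ 0 := by exact_mod_cast ne_of_gt hpos
      have hμsq : ((Real.sqrt (hAH.eigenvalues i) : ℝ):ℂ)^2 = ((hAH.eigenvalues i : ℝ):ℂ) := by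
        exact_mod_cast Real.sq_sqrt (hν i)
      have hsol := ode_solve_pos (hAH.eigenvalues i) hpos
        (dotProduct (star (evec hAH i)) u₀)
        (dotProduct (star (evec hAH i)) f) (g i) (hg_diff i) (hg_diff' i)
        (hg_dd i) (hg0 i) (hg'0 i)
      have hfun : (fun s : ℝ => ((κ T s : ℝ):ℂ) * g i s)
          = fun s : ℝ => ((dotProduct (star (evec hAH i)) u₀)
              - (dotProduct (star (evec hAH i)) f)/((hAH.eigenvalues i : ℝ):ℂ))
                * (((κ T s : ℝ):ℂ) * Complex.cos ((Real.sqrt (hAH.eigenvalues i) : ℝ) * s))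
            + ((dotProduct (star (evec hAH i)) f)/((hAH.eigenvalues i : ℝ):ℂ))
                * ((κ T s : ℝ):ℂ) := by
        funext s; rw [hsol s]; ring
      constructor
      · rw [hfun]
        exact ((integrable_kappa_cos T hT _).const_mul _).add
          ((integrable_kappa_c T hT).const_mul _)
      · rw [hfun, integral_add (((integrable_kappa_cos T hT _).const_mul _))
          (((integrable_kappa_c T hT).const_mul _)), integral_const_mul, integral_const_mul,
          integral_kappa_cos T hT _, integral_kappa_one T hT]
        rw [hμsq, if_neg (ne_of_gt hpos)]
        have hE : Complex.exp (-(((hAH.eigenvalues i : ℝ):ℂ) * T))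
            = Complex.exp (-((hAH.eigenvalues i : ℝ):ℂ) * T) := by ring_nf
        rw [hE]
        field_simp
        ring
  -- LHS term 1
  have hmulVec_sum : ∀ (M : Matrix (Fin n) (Fin n) ℂ) (d : Fin n → ℂ) (x : Fin n → Fin n → ℂ),
      M *ᵥ (∑ i, d i • x i) = ∑ i, d i • (M *ᵥ x i) := by
    intro M d x
    have h := map_sum (Matrix.mulVecLin M) (fun i => d i • x i) Finset.univ
    simp only [LinearMap.map_smul, Matrix.mulVecLin_apply] at h
    exact h
  have hLHS1 : (NormedSpace.exp (-(T : ℂ) • A)).mulVec u₀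
      = ∑ i, ((dotProduct (star (evec hAH i)) u₀)
          * Complex.exp (-((hAH.eigenvalues i : ℝ):ℂ) * T)) • evec hAH i := by
    conv_lhs => rw [decomp_vec hAH u₀]
    rw [hmulVec_sum]
    refine Finset.sum_congr rfl fun i _ => ?_
    rw [exp_eigen hAH (-(T:ℂ)) i, smul_smul]
    congr 2
    ring
  -- LHS term 2
  have hfd : ∀ s : ℝ, (NormedSpace.exp (-((T - s : ℝ) : ℂ) • A)).mulVec f
      = ∑ i, ((dotProduct (star (evec hAH i)) f)
          * Complex.exp (-(((T - s : ℝ)):ℂ) * (hAH.eigenvalues i))) • evec hAH i := by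
    intro s
    conv_lhs => rw [decomp_vec hAH f]
    rw [hmulVec_sum]
    refine Finset.sum_congr rfl fun i _ => ?_
    rw [exp_eigen hAH (-(((T - s : ℝ)):ℂ)) i, smul_smul]
  have hcont : ∀ i : Fin n, Continuous (fun s : ℝ =>
      ((dotProduct (star (evec hAH i)) f)
        * Complex.exp (-(((T - s : ℝ)):ℂ) * (hAH.eigenvalues i))) • evec hAH i) := by
    intro i
    apply Continuous.fun_smul _ continuous_const
    apply Continuous.mul continuous_const
    apply Complex.continuous_exp.comp
    apply Continuous.mul _ continuous_const
    exact (Complex.continuous_ofReal.comp (continuous_const.sub continuous_id)).neg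
  have hLHS2 : (∫ s in (0 : ℝ)..T, (NormedSpace.exp (-((T - s : ℝ) : ℂ) • A)).mulVec f)
      = ∑ i, ((dotProduct (star (evec hAH i)) f)
          * (∫ s in (0:ℝ)..T, Complex.exp (-(((T - s : ℝ)):ℂ) * (hAH.eigenvalues i))))
            • evec hAH i := by
    rw [intervalIntegral.integral_congr (g := fun s => ∑ i,
      ((dotProduct (star (evec hAH i)) f)
        * Complex.exp (-(((T - s : ℝ)):ℂ) * (hAH.eigenvalues i))) • evec hAH i)
      (fun s _ => hfd s)]
    rw [intervalIntegral.integral_finset_sum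
      (fun i _ => ((hcont i).intervalIntegrable 0 T))]
    refine Finset.sum_congr rfl fun i _ => ?_
    rw [intervalIntegral.integral_smul_const, intervalIntegral.integral_const_mul]
  -- RHS
  have hpoint : ∀ s : ℝ, ((Real.sqrt (4 * Real.pi * T))⁻¹ * Real.exp (-s ^ 2 / (4 * T))) • w s
      = ∑ i, (((κ T s : ℝ):ℂ) * g i s) • evec hAH i := by
    intro s
    have h1 : ((Real.sqrt (4 * Real.pi * T))⁻¹ * Real.exp (-s ^ 2 / (4 * T))) • w s
        = κ T s • w s := rfl
    rw [h1]
    conv_lhs => rw [decomp_vec hAH (w s)]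
    rw [Finset.smul_sum]
    refine Finset.sum_congr rfl fun i _ => ?_
    rw [← smul_assoc]
    congr 1
  have hRHS : (∫ s : ℝ, ((Real.sqrt (4 * Real.pi * T))⁻¹ * Real.exp (-s ^ 2 / (4 * T))) • w s)
      = ∑ i, (∫ s : ℝ, ((κ T s : ℝ):ℂ) * g i s) • evec hAH i := by
    rw [integral_congr_ae (Filter.Eventually.of_forall hpoint)]
    rw [integral_finset_sum _ (fun i _ => ((key i).1).smul_const _)]
    refine Finset.sum_congr rfl fun i _ => ?_
    rw [integral_smul_const]
  rw [hLHS1, hLHS2, hRHS, ← Finset.sum_add_distrib]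
  refine Finset.sum_congr rfl fun i _ => ?_
  rw [(key i).2, add_smul]
end

section
/- Let L be an m×n complex matrix, and let H be the (n+m)×(n+m) Hermitian block matrix H = [[0, i·Lᴴ], [−i·L, 0]]. Let u₀ ∈ ℂⁿ and let ψ₀ = (u₀, 0) ∈ ℂⁿ⁺ᵐ. Then for every T > 0, the first (ℂⁿ) block of the vector ∫_ℝ κ_T(s)·exp(−i·s·H)·ψ₀ ds equals exp(−T·Lᴴ·L)·u₀. -/
open MeasureTheory Real Matrix Complex

open NormedSpace in
private lemma kannai_exp_unitary_conj {ι : Type*} [Fintype ι] [DecidableEq ι]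
    (V : Matrix.unitaryGroup ι ℂ) (A : Matrix ι ι ℂ) :
    exp ((V : Matrix ι ι ℂ) * A * star (V : Matrix ι ι ℂ)) =
      (V : Matrix ι ι ℂ) * exp A * star (V : Matrix ι ι ℂ) := by
  let u : (Matrix ι ι ℂ)ˣ :=
    ⟨(V : Matrix ι ι ℂ), star (V : Matrix ι ι ℂ),
      (Matrix.mem_unitaryGroup_iff).mp V.2, (Matrix.mem_unitaryGroup_iff').mp V.2⟩
  exact Matrix.exp_units_conj u A

open NormedSpace in
private lemma kannai_exp_conj_diag {ι : Type*} [Fintype ι] [DecidableEq ι]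
    (V : Matrix.unitaryGroup ι ℂ) (d : ι → ℂ) :
    exp ((V : Matrix ι ι ℂ) * Matrix.diagonal d * star (V : Matrix ι ι ℂ)) =
      (V : Matrix ι ι ℂ) * Matrix.diagonal (fun j => Complex.exp (d j)) *
        star (V : Matrix ι ι ℂ) := by
  rw [kannai_exp_unitary_conj, Matrix.exp_diagonal, Pi.exp_def]
  simp_rw [Complex.exp_eq_exp_ℂ]

private lemma kannai_gaussian {T : ℝ} (hT : 0 < T) (x : ℝ) :
    ∫ s : ℝ, ((Real.sqrt (4 * π * T))⁻¹ * Real.exp (-s ^ 2 / (4 * T))) •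
        Complex.exp (-(Complex.I * s) * x) = Complex.exp (-(T : ℂ) * x ^ 2) := by
  have h4T : (0:ℝ) < 4 * T := by linarith
  have hb : (0:ℝ) < ((((4*T)⁻¹ : ℝ) : ℂ)).re := by
    simpa using inv_pos.mpr h4T
  have key := fourierIntegral_gaussian (b := (((4*T)⁻¹ : ℝ) : ℂ)) hb (-(x:ℂ))
  have hsq : (0:ℝ) < 4 * π * T := by positivity
  have h1 : (fun s : ℝ => ((Real.sqrt (4 * π * T))⁻¹ * Real.exp (-s ^ 2 / (4 * T))) •
        Complex.exp (-(Complex.I * s) * x))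
      = fun s : ℝ => ((Real.sqrt (4 * π * T) : ℝ) : ℂ)⁻¹ *
        (Complex.exp (Complex.I * (-(x:ℂ)) * s) *
          Complex.exp (-(((4*T)⁻¹ : ℝ) : ℂ) * s ^ 2)) := by
    funext s
    rw [Complex.real_smul]
    push_cast
    rw [mul_assoc, ← Complex.exp_add, ← Complex.exp_add]
    congr 2
    ring
  rw [h1, MeasureTheory.integral_const_mul, key]
  have h2 : ((π : ℂ) / (((4*T)⁻¹ : ℝ) : ℂ)) = ((4 * π * T : ℝ) : ℂ) := by
    push_cast
    field_simp
  have h3 : (-(-(x:ℂ)) ^ 2 / (4 * (((4*T)⁻¹ : ℝ) : ℂ))) = -(T:ℂ) * x ^ 2 := by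
    have hT0 : (T:ℂ) ≠ 0 := by exact_mod_cast ne_of_gt hT
    push_cast
    field_simp
  rw [h2, h3]
  have h4 : ((4 * π * T : ℝ) : ℂ) ^ (1/2 : ℂ) = ((Real.sqrt (4 * π * T) : ℝ) : ℂ) := by
    rw [show (1/2 : ℂ) = ((1/2 : ℝ) : ℂ) by norm_num, ← Complex.ofReal_cpow hsq.le]
    norm_num [Real.sqrt_eq_rpow]
  rw [h4, ← mul_assoc, inv_mul_cancel₀ (by exact_mod_cast (Real.sqrt_ne_zero'.mpr hsq)), one_mul]

private lemma kannai_gaussian_integrable {T : ℝ} (hT : 0 < T) (x : ℝ) :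
    Integrable (fun s : ℝ => ((Real.sqrt (4 * π * T))⁻¹ * Real.exp (-s ^ 2 / (4 * T))) •
        Complex.exp (-(Complex.I * s) * x)) := by
  have h4T : (0:ℝ) < 4 * T := by linarith
  have hb : (0:ℝ) < ((((4*T)⁻¹ : ℝ) : ℂ)).re := by simpa using inv_pos.mpr h4T
  have h1 : (fun s : ℝ => ((Real.sqrt (4 * π * T))⁻¹ * Real.exp (-s ^ 2 / (4 * T))) •
        Complex.exp (-(Complex.I * s) * x))
      = fun s : ℝ => ((Real.sqrt (4 * π * T) : ℝ) : ℂ)⁻¹ *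
        Complex.exp (-(((4*T)⁻¹ : ℝ) : ℂ) * s ^ 2 + (-(Complex.I * x)) * s + 0) := by
    funext s
    rw [Complex.real_smul]
    push_cast
    rw [mul_assoc, ← Complex.exp_add]
    congr 2
    ring
  rw [h1]
  exact (integrable_cexp_quadratic hb _ _).const_mul _

noncomputable def kannaiBlockHom (n m : ℕ) :
    (Matrix (Fin n) (Fin n) ℂ × Matrix (Fin m) (Fin m) ℂ) →ₐ[ℂ]
      Matrix (Fin n ⊕ Fin m) (Fin n ⊕ Fin m) ℂ where
  toFun p := Matrix.fromBlocks p.1 0 0 p.2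
  map_one' := Matrix.fromBlocks_one
  map_mul' p q := by simp [Matrix.fromBlocks_multiply]
  map_zero' := by simp
  map_add' p q := by simp [Matrix.fromBlocks_add]
  commutes' r := by
    simp only [Algebra.algebraMap_eq_smul_one, Prod.smul_def, Prod.fst, Prod.snd]
    rw [← Matrix.fromBlocks_one, Matrix.fromBlocks_smul]
    simp

open NormedSpace in
private lemma kannai_exp_fromBlocks {n m : ℕ} (A : Matrix (Fin n) (Fin n) ℂ)
    (D : Matrix (Fin m) (Fin m) ℂ) :
    exp (Matrix.fromBlocks A 0 0 D) = Matrix.fromBlocks (exp A) 0 0 (exp D) := by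
  letI : SeminormedRing (Matrix (Fin n) (Fin n) ℂ) := Matrix.linftyOpSemiNormedRing
  letI : NormedRing (Matrix (Fin n) (Fin n) ℂ) := Matrix.linftyOpNormedRing
  letI : NormedAlgebra ℂ (Matrix (Fin n) (Fin n) ℂ) := Matrix.linftyOpNormedAlgebra
  letI : NormedAlgebra ℚ (Matrix (Fin n) (Fin n) ℂ) := Matrix.linftyOpNormedAlgebra
  letI : SeminormedRing (Matrix (Fin m) (Fin m) ℂ) := Matrix.linftyOpSemiNormedRing
  letI : NormedRing (Matrix (Fin m) (Fin m) ℂ) := Matrix.linftyOpNormedRing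
  letI : NormedAlgebra ℂ (Matrix (Fin m) (Fin m) ℂ) := Matrix.linftyOpNormedAlgebra
  letI : NormedAlgebra ℚ (Matrix (Fin m) (Fin m) ℂ) := Matrix.linftyOpNormedAlgebra
  letI : SeminormedRing (Matrix (Fin n ⊕ Fin m) (Fin n ⊕ Fin m) ℂ) :=
    Matrix.linftyOpSemiNormedRing
  letI : NormedRing (Matrix (Fin n ⊕ Fin m) (Fin n ⊕ Fin m) ℂ) := Matrix.linftyOpNormedRing
  letI : NormedAlgebra ℂ (Matrix (Fin n ⊕ Fin m) (Fin n ⊕ Fin m) ℂ) :=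
    Matrix.linftyOpNormedAlgebra
  have hcont : Continuous (kannaiBlockHom n m) :=
    (kannaiBlockHom n m).toLinearMap.continuous_of_finiteDimensional
  have h := map_exp (kannaiBlockHom n m) hcont (A, D)
  have hprod : exp ((A, D) : Matrix (Fin n) (Fin n) ℂ × Matrix (Fin m) (Fin m) ℂ)
      = (exp A, exp D) := by
    ext1
    · exact Prod.fst_exp _
    · exact Prod.snd_exp _
  erw [hprod] at h
  simp [kannaiBlockHom] at h
  exact h.symm


open NormedSpace in
private lemma kannai_core {ι : Type*} [Fintype ι] [DecidableEq ι]
    (V : Matrix.unitaryGroup ι ℂ) (lam : ι → ℝ)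
    (H : Matrix ι ι ℂ)
    (hspec : H = (V : Matrix ι ι ℂ) * Matrix.diagonal (fun j => (lam j : ℂ)) *
      star (V : Matrix ι ι ℂ))
    (ψ₀ : ι → ℂ) (T : ℝ) (hT : 0 < T) :
    (∫ s : ℝ, ((Real.sqrt (4 * Real.pi * T))⁻¹ * Real.exp (-s ^ 2 / (4 * T))) •
        (exp (-(Complex.I * (s:ℂ)) • H)).mulVec ψ₀)
      = (exp (-(T:ℂ) • (H * H))) *ᵥ ψ₀ := by
  set U : Matrix ι ι ℂ := (V : Matrix ι ι ℂ) with hU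
  have hw1 : star U * U = 1 := Matrix.mem_unitaryGroup_iff'.mp V.2
  have hsmul : ∀ (c : ℂ) (d : ι → ℂ),
      c • (U * Matrix.diagonal d * star U)
        = U * Matrix.diagonal (fun j => c * d j) * star U := by
    intro c d
    have hd : (fun j => c * d j) = c • d := rfl
    rw [hd, Matrix.diagonal_smul, mul_smul_comm, smul_mul_assoc]
  have hevol : ∀ s : ℝ, exp (-(Complex.I * (s:ℂ)) • H)
      = U * Matrix.diagonal (fun j => Complex.exp (-(Complex.I * s) * lam j)) * star U := by
    intro s
    rw [hspec, hsmul, kannai_exp_conj_diag]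
  have hH2 : H * H = U * Matrix.diagonal (fun j => ((lam j : ℂ))^2) * star U := by
    conv_lhs => rw [hspec]
    simp only [Matrix.mul_assoc]
    rw [show star U * (U * (Matrix.diagonal (fun j => (lam j : ℂ)) * star U))
        = Matrix.diagonal (fun j => (lam j : ℂ)) * star U by
      rw [← Matrix.mul_assoc, hw1, Matrix.one_mul]]
    rw [← Matrix.mul_assoc (Matrix.diagonal _) (Matrix.diagonal _),
      Matrix.diagonal_mul_diagonal]
    simp [Matrix.mul_assoc, sq]
  have hTexp : exp (-(T:ℂ) • (H * H))
      = U * Matrix.diagonal (fun j => Complex.exp (-(T:ℂ) * (lam j:ℂ)^2)) * star U := by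
    rw [hH2, hsmul, kannai_exp_conj_diag]
  set w : ι → ℂ := star U *ᵥ ψ₀ with hwdef
  have hexpand : ∀ e : ι → ℂ,
      (U * Matrix.diagonal e * star U) *ᵥ ψ₀
        = ∑ j, (e j * w j) • (fun a => U a j) := by
    intro e
    have hdm : Matrix.diagonal e *ᵥ w = fun j => e j * w j := by
      funext j; exact Matrix.mulVec_diagonal e w j
    funext a
    rw [← Matrix.mulVec_mulVec, ← Matrix.mulVec_mulVec, ← hwdef, hdm]
    simp only [Matrix.mulVec, dotProduct, Finset.sum_apply, Pi.smul_apply, smul_eq_mul]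
    exact Finset.sum_congr rfl fun j _ => by ring
  have h1 : (fun s : ℝ => ((Real.sqrt (4 * Real.pi * T))⁻¹ * Real.exp (-s ^ 2 / (4 * T))) •
        (exp (-(Complex.I * (s:ℂ)) • H)).mulVec ψ₀)
      = fun s => ∑ j, (((Real.sqrt (4 * Real.pi * T))⁻¹ * Real.exp (-s ^ 2 / (4 * T))) •
          Complex.exp (-(Complex.I * s) * lam j)) • ((w j) • (fun a => U a j)) := by
    funext s
    rw [hevol s, hexpand, Finset.smul_sum]
    refine Finset.sum_congr rfl fun j _ => ?_
    funext a
    simp only [Pi.smul_apply, smul_eq_mul, Complex.real_smul, Complex.ofReal_mul,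
      Complex.ofReal_inv, Complex.ofReal_exp]
    ring
  rw [h1, MeasureTheory.integral_finset_sum _
    (fun j _ => ((kannai_gaussian_integrable hT (lam j)).smul_const _))]
  conv_rhs => rw [hTexp, hexpand]
  refine Finset.sum_congr rfl fun j _ => ?_
  rw [integral_smul_const, kannai_gaussian hT, smul_smul]

/-- Kannai transform through the Hermitian dilation: the first block of the
Gaussian average of the unitary evolution `e^{-isH} ψ₀` equals
`e^{-T LᴴL} u₀`, where `H = [[0, i Lᴴ], [-i L, 0]]` and `ψ₀ = (u₀, 0)`. -/
theorem kannai_hermitian_dilation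
    (m n : ℕ) (L : Matrix (Fin m) (Fin n) ℂ)
    (H : Matrix (Fin n ⊕ Fin m) (Fin n ⊕ Fin m) ℂ)
    (hH : H = Matrix.fromBlocks 0 (Complex.I • Lᴴ) (-(Complex.I) • L) 0)
    (u₀ : Fin n → ℂ)
    (ψ₀ : Fin n ⊕ Fin m → ℂ) (hψ₀ : ψ₀ = Sum.elim u₀ 0)
    (T : ℝ) (hT : 0 < T) :
    ∀ i : Fin n,
      (∫ s : ℝ, ((Real.sqrt (4 * Real.pi * T))⁻¹ * Real.exp (-s ^ 2 / (4 * T))) •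
          (NormedSpace.exp (-(Complex.I * (s : ℂ)) • H)).mulVec ψ₀) (Sum.inl i) =
        ((NormedSpace.exp (-(T : ℂ) • (Lᴴ * L))).mulVec u₀) i := by
  intro i
  have hHerm : H.IsHermitian := by
    rw [hH, Matrix.IsHermitian, Matrix.fromBlocks_conjTranspose]
    simp [Matrix.conjTranspose_smul]
  have hIntegral := kannai_core hHerm.eigenvectorUnitary hHerm.eigenvalues H
    hHerm.spectral_theorem ψ₀ T hT
  rw [hIntegral]
  have hblocks : -(T:ℂ) • (H * H)
      = Matrix.fromBlocks (-(T:ℂ) • (Lᴴ * L)) 0 0 (-(T:ℂ) • (L * Lᴴ)) := by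
    rw [hH, Matrix.fromBlocks_multiply]
    simp only [Matrix.mul_zero, Matrix.zero_mul, add_zero, zero_add,
      Matrix.smul_mul, Matrix.mul_smul, smul_smul]
    have e1 : (-(T:ℂ)) * (-Complex.I * Complex.I) = -(T:ℂ) := by simp
    have e2 : (-(T:ℂ)) * (Complex.I * -Complex.I) = -(T:ℂ) := by simp
    simp [Matrix.fromBlocks_smul, smul_smul, e1, e2, Matrix.fromBlocks_neg]
  rw [hblocks, kannai_exp_fromBlocks, hψ₀, Matrix.fromBlocks_mulVec]
  simp
end

section
/- Let n be a positive integer, let H be an n×n complex Hermitian matrix, let ψ₀ ∈ ℂⁿ, and let T, R > 0. Then ‖∫_ℝ κ_T(s)·exp(−i·s·H)·ψ₀ ds − ∫_{−R}^{R} κ_T(s)·exp(−i·s·H)·ψ₀ ds‖ ≤ (2√T/(√π·R))·e^{−R²/(4T)}·‖ψ₀‖. -/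
open MeasureTheory Real Matrix Complex

open scoped Matrix.Norms.L2Operator

section aux

/-- Tail bound for the Gaussian integral. -/
lemma kannai_gaussian_tail (T R : ℝ) (hT : 0 < T) (hR : 0 < R) :
    ∫ s in Set.Ioi R, Real.exp (-s ^ 2 / (4 * T)) ≤ 2 * T / R * Real.exp (-R ^ 2 / (4 * T)) := by
  have hb : (0 : ℝ) < 1 / (4 * T) := by positivity
  have hexp_eq : ∀ s : ℝ, Real.exp (-s ^ 2 / (4 * T)) = Real.exp (-(1 / (4 * T)) * s ^ 2) := by
    intro s; ring_nf
  have h1 : IntegrableOn (fun s => Real.exp (-s ^ 2 / (4 * T))) (Set.Ioi R) := by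
    simp only [hexp_eq]
    exact (integrable_exp_neg_mul_sq hb).integrableOn
  have h2' : Integrable (fun s : ℝ => s * Real.exp (-s ^ 2 / (4 * T))) := by
    simp only [hexp_eq]
    exact integrable_mul_exp_neg_mul_sq hb
  have h2 : IntegrableOn (fun s : ℝ => s / R * Real.exp (-s ^ 2 / (4 * T))) (Set.Ioi R) := by
    have := (h2'.div_const R).integrableOn (s := Set.Ioi R)
    refine this.congr_fun (fun s _ => by ring) measurableSet_Ioi
  -- compute ∫_{Ioi R} s * exp(-s²/(4T)) = 2T e^{-R²/(4T)}
  have hderiv : ∀ x ∈ Set.Ioi R, HasDerivAt (fun s : ℝ => -(2 * T) * Real.exp (-s ^ 2 / (4 * T)))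
      (x * Real.exp (-x ^ 2 / (4 * T))) x := by
    intro x _
    have h0 : HasDerivAt (fun s : ℝ => -s ^ 2 / (4 * T)) (-x / (2 * T)) x := by
      have := ((hasDerivAt_pow 2 x).neg).div_const (4 * T)
      refine this.congr_deriv ?_
      field_simp
      ring
    have := (h0.exp).const_mul (-(2 * T))
    refine this.congr_deriv ?_
    field_simp
  have htend : Filter.Tendsto (fun s : ℝ => -(2 * T) * Real.exp (-s ^ 2 / (4 * T)))
      Filter.atTop (nhds 0) := by
    have h3 : Filter.Tendsto (fun s : ℝ => -s ^ 2 / (4 * T)) Filter.atTop Filter.atBot := by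
      apply Filter.Tendsto.atBot_div_const (by positivity)
      exact Filter.tendsto_neg_atBot_iff.mpr (Filter.tendsto_pow_atTop two_ne_zero)
    have h4 := Real.tendsto_exp_atBot.comp h3
    simpa using (h4.const_mul (-(2 * T)))
  have hint : ∫ s in Set.Ioi R, s * Real.exp (-s ^ 2 / (4 * T)) =
      2 * T * Real.exp (-R ^ 2 / (4 * T)) := by
    have hcf : Continuous fun s : ℝ => -(2 * T) * Real.exp (-s ^ 2 / (4 * T)) := by
      exact continuous_const.mul (Real.continuous_exp.comp (by continuity))
    rw [integral_Ioi_of_hasDerivAt_of_tendsto hcf.continuousWithinAt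
      hderiv (h2'.integrableOn) htend]
    ring
  calc ∫ s in Set.Ioi R, Real.exp (-s ^ 2 / (4 * T))
      ≤ ∫ s in Set.Ioi R, s / R * Real.exp (-s ^ 2 / (4 * T)) := by
        refine setIntegral_mono_on h1 h2 measurableSet_Ioi (fun x hx => ?_)
        have hx1 : (1 : ℝ) ≤ x / R := (one_le_div hR).mpr (le_of_lt hx)
        nlinarith [Real.exp_pos (-x ^ 2 / (4 * T))]
    _ = (∫ s in Set.Ioi R, s * Real.exp (-s ^ 2 / (4 * T))) / R := by
        rw [← integral_div]
        exact setIntegral_congr_fun measurableSet_Ioi (fun x _ => by ring)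
    _ = 2 * T / R * Real.exp (-R ^ 2 / (4 * T)) := by rw [hint]; ring

end aux

set_option maxHeartbeats 1600000 in
/-- Gaussian truncation error for the homogeneous Kannai integral:
truncating the Gaussian average of `e^{-isH} ψ₀` to `[-R, R]` incurs an error
at most `(2√T/(√π R)) e^{-R²/(4T)} ‖ψ₀‖`. -/
theorem kannai_truncation_homogeneous
    (n : ℕ) (hn : 0 < n) (H : Matrix (Fin n) (Fin n) ℂ) (hH : H.IsHermitian)
    (ψ₀ : EuclideanSpace ℂ (Fin n)) (T R : ℝ) (hT : 0 < T) (hR : 0 < R) :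
    ‖(∫ s : ℝ, ((Real.sqrt (4 * Real.pi * T))⁻¹ * Real.exp (-s ^ 2 / (4 * T))) •
          Matrix.toEuclideanCLM (𝕜 := ℂ) (NormedSpace.exp (-(Complex.I * (s : ℂ)) • H)) ψ₀) -
        ∫ s in (-R : ℝ)..R, ((Real.sqrt (4 * Real.pi * T))⁻¹ * Real.exp (-s ^ 2 / (4 * T))) •
          Matrix.toEuclideanCLM (𝕜 := ℂ) (NormedSpace.exp (-(Complex.I * (s : ℂ)) • H)) ψ₀‖ ≤
      (2 * Real.sqrt T / (Real.sqrt Real.pi * R)) * Real.exp (-R ^ 2 / (4 * T)) * ‖ψ₀‖ := by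
  classical
  letI : NormedAlgebra ℚ (Matrix (Fin n) (Fin n) ℂ) := .restrictScalars ℚ ℂ _
  set c : ℝ := (Real.sqrt (4 * Real.pi * T))⁻¹ with hc
  have hcpos : 0 < c := by
    rw [hc]
    positivity
  set φ := Matrix.toEuclideanCLM (𝕜 := ℂ) (n := Fin n)
  set f : ℝ → EuclideanSpace ℂ (Fin n) := fun s =>
    (c * Real.exp (-s ^ 2 / (4 * T))) • φ (NormedSpace.exp (-(Complex.I * (s : ℂ)) • H)) ψ₀
    with hf
  -- unitarity : ‖exp(-isH) ψ₀‖ = ‖ψ₀‖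
  have hφ_norm : ∀ s : ℝ, ‖φ (NormedSpace.exp (-(Complex.I * (s : ℂ)) • H)) ψ₀‖ = ‖ψ₀‖ := by
    intro s
    have hcoef : star (-(Complex.I * (s : ℂ))) = Complex.I * (s : ℂ) := by
      simp [Complex.ext_iff]
    have hstar : star (-(Complex.I * (s : ℂ)) • H) = -(-(Complex.I * (s : ℂ)) • H) := by
      rw [Matrix.star_eq_conjTranspose, Matrix.conjTranspose_smul, hH.eq, hcoef,
        ← neg_smul, neg_neg]
    have hmem : NormedSpace.exp (-(Complex.I * (s : ℂ)) • H) ∈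
        unitary (Matrix (Fin n) (Fin n) ℂ) := by
      rw [Unitary.mem_iff]
      constructor
      · rw [NormedSpace.star_exp, hstar, ← NormedSpace.exp_add_of_commute
          ((Commute.refl _).neg_left), neg_add_cancel, NormedSpace.exp_zero]
      · rw [NormedSpace.star_exp, hstar, ← NormedSpace.exp_add_of_commute
          ((Commute.refl _).neg_right), add_neg_cancel, NormedSpace.exp_zero]
    have hmem' : φ (NormedSpace.exp (-(Complex.I * (s : ℂ)) • H)) ∈
        unitary (EuclideanSpace ℂ (Fin n) →L[ℂ] EuclideanSpace ℂ (Fin n)) := by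
      rw [Unitary.mem_iff] at hmem ⊢
      constructor
      · rw [← map_star, ← _root_.map_mul, hmem.1, _root_.map_one]
      · rw [← map_star, ← _root_.map_mul, hmem.2, _root_.map_one]
    exact ContinuousLinearMap.norm_map_of_mem_unitary hmem' ψ₀
  have hnorm_f : ∀ s : ℝ, ‖f s‖ = c * Real.exp (-s ^ 2 / (4 * T)) * ‖ψ₀‖ := by
    intro s
    rw [hf, norm_smul, hφ_norm s, Real.norm_eq_abs, abs_of_pos (by positivity)]
  -- continuity of f
  have hφ_cont : Continuous φ :=
    (AddMonoidHomClass.isometry_of_norm φ fun A => rfl).continuous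
  have hcont : Continuous f := by
    rw [hf]
    apply Continuous.fun_smul
    · exact continuous_const.mul (Real.continuous_exp.comp (by continuity))
    · refine Continuous.clm_apply ?_ continuous_const
      apply hφ_cont.comp
      exact NormedSpace.exp_continuous.comp
        (((continuous_const.mul Complex.continuous_ofReal).neg).smul continuous_const)
  -- integrability
  have hexp_eq : ∀ s : ℝ, Real.exp (-s ^ 2 / (4 * T)) = Real.exp (-(1 / (4 * T)) * s ^ 2) := by
    intro s; ring_nf
  have hgauss : Integrable (fun s : ℝ => c * Real.exp (-s ^ 2 / (4 * T)) * ‖ψ₀‖) := by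
    simp only [hexp_eq]
    exact ((integrable_exp_neg_mul_sq (by positivity)).const_mul c).mul_const ‖ψ₀‖
  have hint : Integrable f := by
    refine hgauss.mono' hcont.aestronglyMeasurable ?_
    filter_upwards with s
    rw [hnorm_f s]
  have hRR : (-R : ℝ) ≤ R := by linarith
  -- the difference equals the integral over the complement of Ioc (-R) R
  have hsplit : (∫ s : ℝ, f s) - (∫ s in (-R : ℝ)..R, f s) = ∫ s in (Set.Ioc (-R) R)ᶜ, f s := by
    rw [intervalIntegral.integral_of_le hRR,
      ← integral_add_compl measurableSet_Ioc hint]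
    abel
  have hcompl : (Set.Ioc (-R : ℝ) R)ᶜ = Set.Iic (-R) ∪ Set.Ioi R := by
    ext x
    simp only [Set.mem_compl_iff, Set.mem_Ioc, Set.mem_union, Set.mem_Iic, Set.mem_Ioi,
      not_and_or, not_lt, not_le]
  -- bound the norm by the Gaussian tail integral
  have hbound : ‖∫ s in (Set.Ioc (-R) R)ᶜ, f s‖ ≤
      ∫ s in (Set.Ioc (-R) R)ᶜ, c * Real.exp (-s ^ 2 / (4 * T)) * ‖ψ₀‖ := by
    refine (norm_integral_le_integral_norm f).trans ?_
    apply le_of_eq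
    exact setIntegral_congr_fun (measurableSet_Ioc.compl) (fun x _ => hnorm_f x)
  -- split the complement integral
  have hIic : ∫ s in Set.Iic (-R : ℝ), c * Real.exp (-s ^ 2 / (4 * T)) * ‖ψ₀‖ =
      ∫ s in Set.Ioi R, c * Real.exp (-s ^ 2 / (4 * T)) * ‖ψ₀‖ := by
    have := integral_comp_neg_Iic (-R)
      (fun s : ℝ => c * Real.exp (-s ^ 2 / (4 * T)) * ‖ψ₀‖)
    simp only [neg_neg] at this
    rw [← this]
    apply setIntegral_congr_fun measurableSet_Iic
    intro x _
    simp only [neg_sq]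
  have hIoi_int : IntegrableOn (fun s : ℝ => c * Real.exp (-s ^ 2 / (4 * T)) * ‖ψ₀‖)
      (Set.Ioi R) := hgauss.integrableOn
  have hIic_int : IntegrableOn (fun s : ℝ => c * Real.exp (-s ^ 2 / (4 * T)) * ‖ψ₀‖)
      (Set.Iic (-R)) := hgauss.integrableOn
  have hsum : ∫ s in (Set.Ioc (-R) R)ᶜ, c * Real.exp (-s ^ 2 / (4 * T)) * ‖ψ₀‖ =
      2 * ∫ s in Set.Ioi R, c * Real.exp (-s ^ 2 / (4 * T)) * ‖ψ₀‖ := by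
    rw [hcompl, setIntegral_union ?_ measurableSet_Ioi hIic_int hIoi_int, hIic]
    · ring
    · rw [Set.disjoint_left]
      intro x hx hx'
      simp only [Set.mem_Iic] at hx
      simp only [Set.mem_Ioi] at hx'
      linarith
  -- Gaussian tail bound
  have htail : ∫ s in Set.Ioi R, c * Real.exp (-s ^ 2 / (4 * T)) * ‖ψ₀‖ ≤
      c * (2 * T / R * Real.exp (-R ^ 2 / (4 * T))) * ‖ψ₀‖ := by
    rw [show (fun s : ℝ => c * Real.exp (-s ^ 2 / (4 * T)) * ‖ψ₀‖) =
        (fun s : ℝ => (c * ‖ψ₀‖) * Real.exp (-s ^ 2 / (4 * T))) from funext fun s => by ring]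
    rw [integral_const_mul]
    have := kannai_gaussian_tail T R hT hR
    calc c * ‖ψ₀‖ * ∫ s in Set.Ioi R, Real.exp (-s ^ 2 / (4 * T))
        ≤ c * ‖ψ₀‖ * (2 * T / R * Real.exp (-R ^ 2 / (4 * T))) := by
          apply mul_le_mul_of_nonneg_left this (by positivity)
      _ = c * (2 * T / R * Real.exp (-R ^ 2 / (4 * T))) * ‖ψ₀‖ := by ring
  -- conclude
  have hfinal : 2 * (c * (2 * T / R * Real.exp (-R ^ 2 / (4 * T))) * ‖ψ₀‖) =
      (2 * Real.sqrt T / (Real.sqrt Real.pi * R)) * Real.exp (-R ^ 2 / (4 * T)) * ‖ψ₀‖ := by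
    have hsqrt : Real.sqrt (4 * Real.pi * T) = 2 * Real.sqrt Real.pi * Real.sqrt T := by
      rw [show (4 : ℝ) * Real.pi * T = (2 * Real.sqrt Real.pi * Real.sqrt T) ^ 2 by
        rw [mul_pow, mul_pow, Real.sq_sqrt Real.pi_pos.le, Real.sq_sqrt hT.le]; ring]
      exact Real.sqrt_sq (by positivity)
    have hTsqrt : Real.sqrt T > 0 := Real.sqrt_pos.mpr hT
    have hpisqrt : Real.sqrt Real.pi > 0 := Real.sqrt_pos.mpr Real.pi_pos
    have hss : Real.sqrt T * Real.sqrt T = T := Real.mul_self_sqrt hT.le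
    rw [hc, hsqrt]
    field_simp
    linear_combination (-‖ψ₀‖) * hss
  calc ‖(∫ s : ℝ, f s) - ∫ s in (-R : ℝ)..R, f s‖
      = ‖∫ s in (Set.Ioc (-R) R)ᶜ, f s‖ := by rw [hsplit]
    _ ≤ ∫ s in (Set.Ioc (-R) R)ᶜ, c * Real.exp (-s ^ 2 / (4 * T)) * ‖ψ₀‖ := hbound
    _ = 2 * ∫ s in Set.Ioi R, c * Real.exp (-s ^ 2 / (4 * T)) * ‖ψ₀‖ := hsum
    _ ≤ 2 * (c * (2 * T / R * Real.exp (-R ^ 2 / (4 * T))) * ‖ψ₀‖) := by linarith [htail]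
    _ = (2 * Real.sqrt T / (Real.sqrt Real.pi * R)) * Real.exp (-R ^ 2 / (4 * T)) * ‖ψ₀‖ :=
        hfinal
end

section
/- Let T > 0 and let k be a natural number. Then for every s ∈ ℝ, the k-th derivative of the Kannai kernel satisfies |κ_T^{(k)}(s)| ≤ (2^{−k/2}·√((2k)!)/√π)·T^{−(k+1)/2}. -/
open Polynomial Finset

lemma two_pow_le_centralBinom : ∀ n : ℕ, 2 ^ n ≤ Nat.centralBinom n := by
  intro n
  induction n with
  | zero => simp [Nat.centralBinom]
  | succ n ih =>
    have h := Nat.succ_mul_centralBinom_succ n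
    have h2 : (n + 1) * (2 * 2 ^ n) ≤ (n + 1) * (n + 1).centralBinom := by
      rw [h]
      calc (n + 1) * (2 * 2 ^ n) = 2 * (n + 1) * 2 ^ n := by ring
        _ ≤ 2 * (2 * n + 1) * 2 ^ n :=
            Nat.mul_le_mul_right _ (Nat.mul_le_mul_left 2 (by omega))
        _ ≤ 2 * (2 * n + 1) * Nat.centralBinom n := Nat.mul_le_mul_left _ ih
    have := Nat.le_of_mul_le_mul_left h2 (Nat.succ_pos n)
    simpa [pow_succ, mul_comm] using this

lemma two_n_three_le (n : ℕ) : 2 * n + 3 ≤ 4 * 2 ^ n := by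
  induction n with
  | zero => norm_num
  | succ m ihm =>
    have : 1 ≤ 2 ^ m := Nat.one_le_two_pow
    calc 2 * (m + 1) + 3 = (2 * m + 3) + 2 := by ring
      _ ≤ 4 * 2 ^ m + 2 := by omega
      _ ≤ 4 * 2 ^ (m + 1) := by rw [pow_succ]; omega

lemma sq_succ_le (n : ℕ) : (n + 1) ^ 2 ≤ 4 * 2 ^ n := by
  induction n with
  | zero => norm_num
  | succ n ih =>
    have h3 := two_n_three_le n
    calc (n + 1 + 1) ^ 2 = (n + 1) ^ 2 + (2 * n + 3) := by ring
      _ ≤ 4 * 2 ^ n + 4 * 2 ^ n := by omega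
      _ = 4 * 2 ^ (n + 1) := by rw [pow_succ]; ring

lemma fact_bound (n : ℕ) : ((n + 1) * n.factorial : ℝ) ≤ 2 * Real.sqrt (Nat.factorial (2 * n)) := by
  have key : ((n + 1) * n.factorial : ℕ) ^ 2 ≤ 4 * Nat.factorial (2 * n) := by
    have hc : Nat.choose (2 * n) n * n.factorial * n.factorial = (2 * n).factorial := by
      have := Nat.choose_mul_factorial_mul_factorial (show n ≤ 2 * n by omega)
      simpa [two_mul, Nat.sub_self, Nat.add_sub_cancel] using this
    have h1 : (n + 1) ^ 2 ≤ 4 * Nat.choose (2 * n) n := by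
      calc (n + 1) ^ 2 ≤ 4 * 2 ^ n := sq_succ_le n
        _ ≤ 4 * Nat.choose (2 * n) n := by
          have := two_pow_le_centralBinom n
          rw [Nat.centralBinom] at this
          exact Nat.mul_le_mul_left _ this
    calc ((n + 1) * n.factorial) ^ 2 = (n + 1) ^ 2 * (n.factorial * n.factorial) := by ring
      _ ≤ (4 * Nat.choose (2 * n) n) * (n.factorial * n.factorial) :=
          Nat.mul_le_mul_right _ h1
      _ = 4 * (Nat.choose (2 * n) n * n.factorial * n.factorial) := by ring
      _ = 4 * (2 * n).factorial := by rw [hc]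
  have h4 : (2 : ℝ) * Real.sqrt (Nat.factorial (2 * n)) = Real.sqrt (4 * Nat.factorial (2 * n)) := by
    rw [show (4 : ℝ) = 2 ^ 2 by norm_num, Real.sqrt_mul (by positivity), Real.sqrt_sq (by norm_num)]
  rw [h4]
  rw [show ((n + 1) * n.factorial : ℝ) = ((((n+1) * n.factorial : ℕ) : ℝ)) by push_cast; ring]
  rw [Real.le_sqrt (by positivity) (by positivity)]
  calc ((((n+1) * n.factorial : ℕ) : ℝ)) ^ 2 = (((((n+1) * n.factorial : ℕ))^2 : ℕ) : ℝ) := by push_cast; ring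
    _ ≤ ((4 * Nat.factorial (2 * n) : ℕ) : ℝ) := by exact_mod_cast key
    _ = 4 * (Nat.factorial (2 * n) : ℝ) := by push_cast; ring

lemma hermite_coeff_abs_le (n i : ℕ) :
    |((Polynomial.hermite n).coeff i : ℝ)| ≤ n.factorial / i.factorial := by
  rw [Polynomial.coeff_hermite]
  split_ifs with h
  · rcases le_or_gt i n with hle | hlt
    · have key : (n - i - 1).doubleFactorial * Nat.choose n i * i.factorial ≤ n.factorial := by
        calc (n - i - 1).doubleFactorial * Nat.choose n i * i.factorial
            ≤ (n - i).factorial * Nat.choose n i * i.factorial := by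
              have h1 : (n - i - 1).doubleFactorial ≤ (n - i - 1).factorial :=
                Nat.doubleFactorial_le_factorial _
              have h2 : (n - i - 1).factorial ≤ (n - i).factorial :=
                Nat.factorial_le (Nat.sub_le _ _)
              exact Nat.mul_le_mul_right _ (Nat.mul_le_mul_right _ (h1.trans h2))
          _ = Nat.choose n i * i.factorial * (n - i).factorial := by ring
          _ = n.factorial := Nat.choose_mul_factorial_mul_factorial hle
      have hfact : (0 : ℝ) < i.factorial := by positivity
      push_cast
      rw [abs_mul, abs_mul, abs_pow, abs_neg, abs_one, one_pow, one_mul,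
        Nat.abs_cast, Nat.abs_cast, le_div_iff₀ hfact]
      exact_mod_cast key
    · rw [Nat.choose_eq_zero_of_lt hlt]
      push_cast
      simp
      positivity
  · simp
    positivity

lemma pow_mul_gauss_le (i : ℕ) (x : ℝ) :
    |x| ^ i * Real.exp (-(x ^ 2 / 2)) ≤ Real.sqrt i.factorial := by
  have hnn : 0 ≤ |x| ^ i * Real.exp (-(x ^ 2 / 2)) := by positivity
  rw [Real.le_sqrt hnn (by positivity)]
  have hsq : (|x| ^ i * Real.exp (-(x ^ 2 / 2))) ^ 2 = (x ^ 2) ^ i * Real.exp (-(x ^ 2)) := by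
    rw [mul_pow, ← pow_mul, mul_comm i 2, pow_mul, sq_abs, sq (Real.exp _), ← Real.exp_add]
    ring_nf
  rw [hsq]
  set t := x ^ 2 with ht
  have ht0 : 0 ≤ t := sq_nonneg x
  have h1 : t ^ i / i.factorial ≤ Real.exp t := by
    refine le_trans ?_ (Real.sum_le_exp_of_nonneg ht0 (i + 1))
    exact Finset.single_le_sum (f := fun j => t ^ j / (Nat.factorial j : ℝ))
      (fun j _ => by positivity) (Finset.self_mem_range_succ i)
  rw [Real.exp_neg, mul_inv_le_iff₀ (Real.exp_pos t)]
  rw [div_le_iff₀ (show (0:ℝ) < i.factorial by positivity)] at h1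
  nlinarith [Real.exp_pos t]

lemma hermite_val_bound (n : ℕ) (x : ℝ) :
    |(Polynomial.aeval x (Polynomial.hermite n) : ℝ)| * Real.exp (-(x ^ 2 / 2)) ≤
      2 * Real.sqrt (Nat.factorial (2 * n)) := by
  have hsum : (Polynomial.aeval x (Polynomial.hermite n) : ℝ) =
      ∑ i ∈ Finset.range (n + 1), ((Polynomial.hermite n).coeff i : ℝ) * x ^ i := by
    rw [Polynomial.aeval_eq_sum_range, Polynomial.natDegree_hermite]
    exact Finset.sum_congr rfl (fun i _ => by rw [zsmul_eq_mul])
  have hexp : 0 ≤ Real.exp (-(x ^ 2 / 2)) := (Real.exp_pos _).le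
  calc |(Polynomial.aeval x (Polynomial.hermite n) : ℝ)| * Real.exp (-(x ^ 2 / 2))
      ≤ (∑ i ∈ Finset.range (n + 1), |((Polynomial.hermite n).coeff i : ℝ)| * |x| ^ i) *
          Real.exp (-(x ^ 2 / 2)) := by
        apply mul_le_mul_of_nonneg_right _ hexp
        rw [hsum]
        refine le_trans (Finset.abs_sum_le_sum_abs _ _) ?_
        exact Finset.sum_le_sum (fun i _ => by rw [abs_mul, abs_pow])
    _ = ∑ i ∈ Finset.range (n + 1),
          |((Polynomial.hermite n).coeff i : ℝ)| * (|x| ^ i * Real.exp (-(x ^ 2 / 2))) := by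
        rw [Finset.sum_mul]; exact Finset.sum_congr rfl (fun i _ => by ring)
    _ ≤ ∑ i ∈ Finset.range (n + 1),
          ((n.factorial : ℝ) / i.factorial) * Real.sqrt i.factorial := by
        refine Finset.sum_le_sum (fun i _ => ?_)
        exact mul_le_mul (hermite_coeff_abs_le n i) (pow_mul_gauss_le i x)
          (by positivity) (by positivity)
    _ ≤ ∑ i ∈ Finset.range (n + 1), (n.factorial : ℝ) := by
        refine Finset.sum_le_sum (fun i _ => ?_)
        have h1 : (1 : ℝ) ≤ i.factorial := by exact_mod_cast i.factorial_pos
        have h2 : Real.sqrt i.factorial ≤ i.factorial := by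
          have := Real.sqrt_le_sqrt (show (i.factorial : ℝ) ≤ (i.factorial : ℝ) ^ 2 by nlinarith)
          rwa [Real.sqrt_sq (by positivity)] at this
        calc ((n.factorial : ℝ) / i.factorial) * Real.sqrt i.factorial
            ≤ ((n.factorial : ℝ) / i.factorial) * i.factorial := by
              apply mul_le_mul_of_nonneg_left h2 (by positivity)
          _ = n.factorial := by field_simp
    _ = (n + 1) * n.factorial := by
        rw [Finset.sum_const, Finset.card_range]; ring
    _ ≤ 2 * Real.sqrt (Nat.factorial (2 * n)) := fact_bound n

lemma inv_sqrt_pow_eq (x : ℝ) (hx : 0 < x) (k : ℕ) :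
    ((Real.sqrt x)⁻¹) ^ k = x ^ (-(k : ℝ) / 2) := by
  have h1 : (Real.sqrt x)⁻¹ = x ^ (-(1 / 2) : ℝ) := by
    rw [Real.sqrt_eq_rpow, ← Real.rpow_neg hx.le]
  rw [h1, ← Real.rpow_natCast (x ^ (-(1 / 2) : ℝ)) k, ← Real.rpow_mul hx.le]
  congr 1
  ring

/-- Bound on the `k`-th derivative of the Kannai (Gaussian) kernel
`κ_T(s) = (4πT)^{-1/2} e^{-s²/(4T)}`:
`|κ_T^{(k)}(s)| ≤ (2^{-k/2} √((2k)!)/√π) T^{-(k+1)/2}`. -/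
theorem kannai_kernel_deriv_bound (T : ℝ) (hT : 0 < T) (k : ℕ) (s : ℝ) :
    |iteratedDeriv k
        (fun s : ℝ => (Real.sqrt (4 * Real.pi * T))⁻¹ * Real.exp (-s ^ 2 / (4 * T))) s| ≤
      (2 : ℝ) ^ (-(k : ℝ) / 2) * Real.sqrt (Nat.factorial (2 * k)) / Real.sqrt Real.pi *
        T ^ (-((k : ℝ) + 1) / 2) := by
  have h2T : (0 : ℝ) < 2 * T := by linarith
  set g : ℝ → ℝ := fun y => Real.exp (-(y ^ 2 / 2)) with hg
  set b : ℝ := (Real.sqrt (2 * T))⁻¹ with hb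
  set c : ℝ := (Real.sqrt (4 * Real.pi * T))⁻¹ with hc
  have hbpos : 0 < b := by rw [hb]; positivity
  have hcpos : 0 < c := by
    rw [hc]
    have : 0 < Real.pi := Real.pi_pos
    positivity
  have hgc : ContDiff ℝ ⊤ g := by
    apply Real.contDiff_exp.comp
    exact ((contDiff_id.pow 2).div_const 2).neg
  have hfun : (fun s : ℝ => c * Real.exp (-s ^ 2 / (4 * T))) = (fun s : ℝ => c * g (b * s)) := by
    funext y
    have hby : (b * y) ^ 2 = y ^ 2 / (2 * T) := by
      rw [mul_pow, hb, inv_pow, Real.sq_sqrt h2T.le]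
      ring
    rw [hg]
    simp only []
    rw [hby]
    ring_nf
  rw [hfun]
  have houter : iteratedDeriv k (fun s : ℝ => c * g (b * s)) s =
      c * iteratedDeriv k (fun s : ℝ => g (b * s)) s := by
    rw [← iteratedDerivWithin_univ, ← iteratedDerivWithin_univ]
    exact iteratedDerivWithin_const_mul (Set.mem_univ s) uniqueDiffOn_univ c
      (((hgc.comp ((contDiff_const (c := b)).mul contDiff_id)).of_le le_top).contDiffOn.contDiffWithinAt (Set.mem_univ s))
  have hinner : iteratedDeriv k (fun x : ℝ => g (b * x)) s =
      b ^ k * iteratedDeriv k g (b * s) := by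
    rw [iteratedDeriv_comp_const_mul (hgc.of_le le_top) b]
  rw [houter, hinner, iteratedDeriv_eq_iterate, hg,
    Polynomial.deriv_gaussian_eq_hermite_mul_gaussian]
  have habs : |c * (b ^ k * ((-1 : ℝ) ^ k * (Polynomial.aeval (b * s)) (Polynomial.hermite k) *
      Real.exp (-((b * s) ^ 2 / 2))))| =
      c * b ^ k * (|(Polynomial.aeval (b * s)) (Polynomial.hermite k)| *
        Real.exp (-((b * s) ^ 2 / 2))) := by
    rw [abs_mul, abs_mul, abs_mul, abs_mul, abs_pow, abs_pow, abs_neg, abs_one, one_pow, one_mul,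
      abs_of_pos hcpos, abs_of_pos hbpos, abs_of_pos (Real.exp_pos _)]
    ring
  rw [habs]
  have hbound := hermite_val_bound k (b * s)
  calc c * b ^ k * (|(Polynomial.aeval (b * s)) (Polynomial.hermite k)| *
        Real.exp (-((b * s) ^ 2 / 2)))
      ≤ c * b ^ k * (2 * Real.sqrt (Nat.factorial (2 * k))) := by
        apply mul_le_mul_of_nonneg_left hbound (by positivity)
    _ = (2 : ℝ) ^ (-(k : ℝ) / 2) * Real.sqrt (Nat.factorial (2 * k)) / Real.sqrt Real.pi *
        T ^ (-((k : ℝ) + 1) / 2) := by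
        have e1 : ((Real.sqrt 2)⁻¹ : ℝ) ^ k = (2 : ℝ) ^ (-(k : ℝ) / 2) :=
          inv_sqrt_pow_eq 2 two_pos k
        have e2 : ((Real.sqrt T)⁻¹) ^ k = T ^ (-(k : ℝ) / 2) := inv_sqrt_pow_eq T hT k
        have e2' : (Real.sqrt T)⁻¹ = T ^ (-(1 : ℝ) / 2) := by
          have := inv_sqrt_pow_eq T hT 1
          simpa using this
        have e3 : T ^ (-((k : ℝ) + 1) / 2) = ((Real.sqrt T)⁻¹) ^ k * (Real.sqrt T)⁻¹ := by
          rw [e2, e2', ← Real.rpow_add hT]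
          congr 1
          ring
        have e4 : b = (Real.sqrt 2)⁻¹ * (Real.sqrt T)⁻¹ := by
          rw [hb, Real.sqrt_mul (by norm_num : (0:ℝ) ≤ 2), mul_inv]
        have e5 : c = ((2 : ℝ) * Real.sqrt Real.pi * Real.sqrt T)⁻¹ := by
          rw [hc]
          congr 1
          rw [show (4 : ℝ) * Real.pi * T = (4 * Real.pi) * T by ring,
            Real.sqrt_mul (by positivity), Real.sqrt_mul (by norm_num : (0:ℝ) ≤ 4),
            show Real.sqrt 4 = 2 by
              rw [show (4 : ℝ) = 2 ^ 2 by norm_num, Real.sqrt_sq (by norm_num)]]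
        rw [e3, e4, e5, mul_pow, e1]
        have hπ : (0 : ℝ) < Real.sqrt Real.pi := Real.sqrt_pos.mpr Real.pi_pos
        have hτ : (0 : ℝ) < Real.sqrt T := Real.sqrt_pos.mpr hT
        field_simp
end

section
/- Let n be a positive integer, let H be an n×n complex Hermitian matrix, let T > 0, and let Q ≥ 1 be an integer. Consider the smooth matrix-valued function F(s) := κ_T(s)·exp(−i·s·H). Then for every s ∈ ℝ, the 2Q-th derivative satisfies ‖F^{(2Q)}(s)‖ ≤ (√((4Q)!)/√T)·(‖H‖ + 1/√(2T))^{2Q}. -/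
open MeasureTheory Real Matrix Complex
open scoped Matrix.Norms.L2Operator FourierTransform

private lemma kannai_fact_aux {Q k : ℕ} (hQ : 1 ≤ Q) (hk : k ≤ 2 * Q) :
    2 ^ k * k.factorial ≤ (4 * Q).factorial := by
  calc 2 ^ k * k.factorial ≤ 2 ^ (2*Q) * (2*Q).factorial :=
        Nat.mul_le_mul (Nat.pow_le_pow_right (by norm_num) hk) (Nat.factorial_le hk)
    _ ≤ (2*Q+1) ^ (2*Q) * (2*Q).factorial :=
        Nat.mul_le_mul_right _ (Nat.pow_le_pow_left (by omega) _)
    _ = (2*Q).factorial * (2*Q+1) ^ (2*Q) := Nat.mul_comm _ _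
    _ ≤ (2*Q + 2*Q).factorial := Nat.factorial_mul_pow_le_factorial
    _ = (4*Q).factorial := by congr 1; omega

private lemma kannai_pointwise_aux (k : ℕ) {c : ℝ} (hc : 0 < c) (y : ℝ) :
    |y| ^ k * Real.exp (-(c * y ^ 2)) ≤ Real.sqrt (k.factorial * ((2 * c)⁻¹) ^ k) := by
  have hL : 0 ≤ |y| ^ k * Real.exp (-(c * y ^ 2)) := by positivity
  rw [← Real.sqrt_sq hL]
  apply Real.sqrt_le_sqrt
  have key : (2*c*y^2)^k ≤ (k.factorial : ℝ) * Real.exp (2*c*y^2) := by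
    have h := Real.pow_div_factorial_le_exp (x := 2*c*y^2) (by positivity) k
    rw [div_le_iff₀ (by positivity : (0:ℝ) < (k.factorial : ℝ))] at h
    linarith [h]
  have key2 : (2*c)^k * ((y^2)^k * Real.exp (-(2*c*y^2))) ≤ (k.factorial : ℝ) := by
    calc (2*c)^k * ((y^2)^k * Real.exp (-(2*c*y^2)))
        = (2*c*y^2)^k * Real.exp (-(2*c*y^2)) := by rw [mul_pow]; ring
      _ ≤ ((k.factorial : ℝ) * Real.exp (2*c*y^2)) * Real.exp (-(2*c*y^2)) :=
          mul_le_mul_of_nonneg_right key (Real.exp_nonneg _)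
      _ = (k.factorial : ℝ) := by
          rw [mul_assoc, ← Real.exp_add, add_neg_cancel, Real.exp_zero, mul_one]
  have hsq : (|y| ^ k * Real.exp (-(c * y ^ 2))) ^ 2
      = (y^2)^k * Real.exp (-(2*c*y^2)) := by
    rw [mul_pow, ← Real.exp_nat_mul, ← pow_mul, mul_comm k 2, pow_mul, _root_.sq_abs]
    congr 1
    push_cast
    ring
  rw [hsq]
  have h3 := mul_le_mul_of_nonneg_right key2
    (by positivity : (0:ℝ) ≤ ((2*c)⁻¹)^k)
  calc (y^2)^k * Real.exp (-(2*c*y^2))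
      = (2*c)^k * ((y^2)^k * Real.exp (-(2*c*y^2))) * ((2*c)⁻¹)^k := by
        have h2c : ((2*c):ℝ)^k ≠ 0 := by positivity
        field_simp
        rw [one_div, mul_assoc, ← mul_pow, mul_inv_cancel₀ (by positivity), one_pow, mul_one]
    _ ≤ (k.factorial : ℝ) * ((2*c)⁻¹)^k := h3

private lemma kannai_gauss_deriv_bound {T : ℝ} (hT : 0 < T) (k : ℕ) (s : ℝ) :
    ‖iteratedDeriv k (fun s : ℝ => (Real.sqrt (4 * π * T))⁻¹ * Real.exp (-s ^ 2 / (4 * T))) s‖ ≤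
      Real.sqrt (k.factorial * (T⁻¹) ^ k) * Real.sqrt (π / (2 * π ^ 2 * T)) := by
  have hπ := Real.pi_pos
  set g : ℝ → ℝ := fun s : ℝ => (Real.sqrt (4 * π * T))⁻¹ * Real.exp (-s ^ 2 / (4 * T)) with hg
  set b : ℂ := ((4 * π * T : ℝ) : ℂ) with hb
  have hbre : 0 < b.re := by rw [hb]; simp; positivity
  set w : ℝ → ℂ := fun x : ℝ => Complex.exp (-(π : ℂ) * b * (x : ℂ) ^ 2) with hw
  -- the Fourier transform of w is (the complexification of) g
  have hFw : 𝓕 w = fun t : ℝ => ((g t : ℝ) : ℂ) := by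
    rw [hw, fourier_gaussian_pi hbre]
    funext t
    have h1 : b ^ (1/2 : ℂ) = ((Real.sqrt (4 * π * T) : ℝ) : ℂ) := by
      rw [Real.sqrt_eq_rpow, hb, show (1/2 : ℂ) = ((1/2 : ℝ) : ℂ) by norm_num,
        ← Complex.ofReal_cpow (by positivity)]
    have h2 : -(π : ℂ) / b * (t : ℂ) ^ 2 = ((-t ^ 2 / (4 * T) : ℝ) : ℂ) := by
      rw [hb]
      have hπ' : (π : ℂ) ≠ 0 := by exact_mod_cast Real.pi_ne_zero
      have hT' : (T : ℂ) ≠ 0 := by exact_mod_cast hT.ne'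
      push_cast
      field_simp
    rw [h1, h2, ← Complex.ofReal_exp, hg]
    push_cast
    ring
  -- norm of w
  have hwnorm : ∀ x : ℝ, ‖w x‖ = Real.exp (-(2 * π ^ 2 * T * x ^ 2) + -(2 * π ^ 2 * T * x ^ 2)) := by
    intro x
    simp only [hw]
    have he : -(π : ℂ) * b * (x : ℂ) ^ 2 = ((-(π * (4 * π * T) * x ^ 2) : ℝ) : ℂ) := by
      rw [hb]; push_cast; ring
    rw [he, ← Complex.ofReal_exp]
    rw [Complex.norm_real, Real.norm_eq_abs, Real.abs_exp]
    congr 1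
    ring
  have hc1 : (0:ℝ) < 2 * π ^ 2 * T := by positivity
  have hwcont : Continuous w := by
    rw [hw]; exact Complex.continuous_exp.comp (by continuity)
  have hwnorm' : ∀ x : ℝ, ‖w x‖ =
      Real.exp (-(2 * π ^ 2 * T * x ^ 2)) * Real.exp (-(2 * π ^ 2 * T) * x ^ 2) := by
    intro x
    rw [hwnorm x, Real.exp_add]
    congr 2
    ring
  have hint : ∀ j : ℕ, Integrable (fun x : ℝ => x ^ j • w x) := by
    intro j
    apply Integrable.mono'
      ((integrable_exp_neg_mul_sq hc1).const_mul
        (Real.sqrt (j.factorial * ((2 * (2 * π ^ 2 * T))⁻¹) ^ j)))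
      (((continuous_pow j).smul hwcont).aestronglyMeasurable)
    filter_upwards with x
    rw [Pi.smul_apply', norm_smul, hwnorm' x, Real.norm_eq_abs, _root_.abs_pow, ← mul_assoc]
    exact mul_le_mul_of_nonneg_right (kannai_pointwise_aux j hc1 x) (Real.exp_nonneg _)
  have hgsmooth : ContDiff ℝ (k : WithTop ℕ∞) g := by
    rw [hg]
    exact contDiff_const.mul (((contDiff_id.pow 2).neg.div_const _).exp)
  have hFw' : (⇑Complex.ofRealLI ∘ g) = 𝓕 w := by
    rw [hFw]; rfl
  have hintegrand : ∀ x : ℝ, ‖(-2 * (π:ℂ) * Complex.I * (x:ℂ)) ^ k • w x‖ ≤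
      Real.sqrt (k.factorial * (T⁻¹) ^ k) * Real.exp (-(2 * π ^ 2 * T) * x ^ 2) := by
    intro x
    rw [norm_smul, norm_pow, hwnorm' x]
    have h1 : ‖(-2 * (π:ℂ) * Complex.I * (x:ℂ))‖ = |2 * π * x| := by
      simp only [norm_mul, Complex.norm_I, Complex.norm_real, Real.norm_eq_abs]
      rw [abs_mul, abs_mul]
      simp [abs_of_pos Real.pi_pos]
    rw [h1, ← mul_assoc]
    have hp := kannai_pointwise_aux k (show (0:ℝ) < T/2 by positivity) (2 * π * x)
    have e2 : (T/2) * (2*π*x)^2 = 2*π^2*T*x^2 := by ring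
    have e3 : ((2*(T/2:ℝ))⁻¹) = T⁻¹ := by norm_num
    rw [e2, e3] at hp
    exact mul_le_mul_of_nonneg_right hp (Real.exp_nonneg _)
  calc ‖iteratedDeriv k g s‖ = ‖iteratedFDeriv ℝ k g s‖ :=
        (norm_iteratedFDeriv_eq_norm_iteratedDeriv).symm
    _ = ‖iteratedFDeriv ℝ k (⇑Complex.ofRealLI ∘ g) s‖ :=
        (Complex.ofRealLI.norm_iteratedFDeriv_comp_left hgsmooth.contDiffAt le_rfl).symm
    _ = ‖iteratedFDeriv ℝ k (𝓕 w) s‖ := by rw [hFw']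
    _ = ‖iteratedDeriv k (𝓕 w) s‖ := norm_iteratedFDeriv_eq_norm_iteratedDeriv
    _ = ‖𝓕 (fun x : ℝ => (-2 * (π:ℂ) * Complex.I * (x:ℂ)) ^ k • w x) s‖ := by
        rw [Real.iteratedDeriv_fourier (N := (k : ℕ∞)) (fun j _ => hint j) le_rfl]
    _ ≤ ∫ x : ℝ, ‖(-2 * (π:ℂ) * Complex.I * (x:ℂ)) ^ k • w x‖ :=
        VectorFourier.norm_fourierIntegral_le_integral_norm _ _ _ _ _
    _ ≤ ∫ x : ℝ, Real.sqrt (k.factorial * (T⁻¹) ^ k) * Real.exp (-(2 * π ^ 2 * T) * x ^ 2) :=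
        integral_mono_of_nonneg (Filter.Eventually.of_forall fun x => norm_nonneg _)
          ((integrable_exp_neg_mul_sq hc1).const_mul _)
          (Filter.Eventually.of_forall hintegrand)
    _ = Real.sqrt (k.factorial * (T⁻¹) ^ k) * Real.sqrt (π / (2 * π ^ 2 * T)) := by
        rw [MeasureTheory.integral_const_mul, integral_gaussian]

private lemma kannai_sqrt_pow_aux {x : ℝ} (hx : 0 ≤ x) (i : ℕ) :
    (Real.sqrt x) ^ i = Real.sqrt (x ^ i) := by
  induction i with
  | zero => simp
  | succ i ih => rw [pow_succ, pow_succ, ih, ← Real.sqrt_mul (by positivity)]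

private lemma kannai_arith {T : ℝ} (hT : 0 < T) {Q i : ℕ} (hQ : 1 ≤ Q) (hi : i ≤ 2*Q) :
    Real.sqrt (i.factorial * (T⁻¹) ^ i) * Real.sqrt (π / (2 * π ^ 2 * T)) ≤
      Real.sqrt ((4*Q).factorial) / Real.sqrt T * (1 / Real.sqrt (2*T)) ^ i := by
  have hπ := Real.pi_pos
  have e1 : Real.sqrt ((4*Q).factorial) / Real.sqrt T * (1 / Real.sqrt (2*T)) ^ i
      = Real.sqrt (((4*Q).factorial) * (T⁻¹ * ((2*T)⁻¹) ^ i)) := by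
    rw [div_eq_mul_inv, one_div, ← Real.sqrt_inv, ← Real.sqrt_inv (2*T),
      kannai_sqrt_pow_aux (by positivity) i,
      Real.sqrt_mul (by positivity : (0:ℝ) ≤ ((4*Q).factorial : ℝ)),
      Real.sqrt_mul (by positivity : (0:ℝ) ≤ T⁻¹), mul_assoc]
  rw [e1, ← Real.sqrt_mul (by positivity)]
  apply Real.sqrt_le_sqrt
  have hfac : (2:ℝ)^i * (i.factorial : ℝ) ≤ ((4*Q).factorial : ℝ) := by
    exact_mod_cast kannai_fact_aux hQ hi
  have hππ : π / (2 * π ^ 2 * T) = (2*π)⁻¹ * T⁻¹ := by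
    field_simp
  have h2Ti : ((2*T)⁻¹ : ℝ)^i = (2⁻¹)^i * (T⁻¹)^i := by rw [mul_inv, mul_pow]
  rw [hππ, h2Ti]
  have key : (i.factorial : ℝ) * (2*π)⁻¹ ≤ ((4*Q).factorial : ℝ) * (2⁻¹)^i := by
    have h1 : (i.factorial : ℝ) * (2*π)⁻¹ ≤ (i.factorial : ℝ) := by
      apply mul_le_of_le_one_right (by positivity)
      rw [inv_le_one_iff₀]
      right
      nlinarith [Real.pi_gt_three]
    have h2 : (i.factorial : ℝ) ≤ ((4*Q).factorial : ℝ) * (2⁻¹)^i := by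
      calc (i.factorial : ℝ) = (2^i * (i.factorial:ℝ)) * (2⁻¹)^i := by
            rw [inv_pow]
            field_simp
        _ ≤ ((4*Q).factorial : ℝ) * (2⁻¹)^i :=
            mul_le_mul_of_nonneg_right hfac (by positivity)
    exact h1.trans h2
  calc (i.factorial : ℝ) * (T⁻¹)^i * ((2*π)⁻¹ * T⁻¹)
      = ((i.factorial : ℝ) * (2*π)⁻¹) * ((T⁻¹)^i * T⁻¹) := by ring
    _ ≤ (((4*Q).factorial : ℝ) * (2⁻¹)^i) * ((T⁻¹)^i * T⁻¹) :=
        mul_le_mul_of_nonneg_right key (by positivity)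
    _ = ((4*Q).factorial : ℝ) * (T⁻¹ * ((2⁻¹)^i * (T⁻¹)^i)) := by ring

section MatrixAux

variable {n : ℕ}

private lemma kannai_exp_norm_one (hn : 0 < n) (H : Matrix (Fin n) (Fin n) ℂ)
    (hH : H.IsHermitian) (s : ℝ) :
    ‖NormedSpace.exp (((s : ℂ)) • ((-Complex.I) • H))‖ = 1 := by
  haveI : Nonempty (Fin n) := ⟨⟨0, hn⟩⟩
  haveI : Nontrivial (Matrix (Fin n) (Fin n) ℂ) := by
    refine ⟨0, 1, fun h => ?_⟩
    have := congrFun (congrFun h ⟨0, hn⟩) ⟨0, hn⟩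
    simp [Matrix.one_apply_eq] at this
  set X : Matrix (Fin n) (Fin n) ℂ := ((s : ℂ)) • ((-Complex.I) • H) with hX
  have hstar : star X = -X := by
    rw [hX, star_smul, star_smul]
    rw [Matrix.star_eq_conjTranspose, hH.eq]
    simp [smul_smul]
  have h1 : star (NormedSpace.exp X) = NormedSpace.exp (-X) := by
    rw [NormedSpace.star_exp, hstar]
  have h2 : star (NormedSpace.exp X) * NormedSpace.exp X = 1 := by
    let +nondep : NormedAlgebra ℚ (Matrix (Fin n) (Fin n) ℂ) := .restrictScalars ℚ ℂ _
    rw [h1, ← NormedSpace.exp_add_of_commute (Commute.refl X).neg_left, neg_add_cancel,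
      NormedSpace.exp_zero]
  have h3 := CStarRing.norm_star_mul_self (x := NormedSpace.exp X)
  rw [h2, norm_one] at h3
  nlinarith [norm_nonneg (NormedSpace.exp X)]

private lemma kannai_exp_contDiff (A : Matrix (Fin n) (Fin n) ℂ) (N : ℕ) :
    ContDiff ℝ (N : WithTop ℕ∞) (fun s : ℝ => NormedSpace.exp ((s : ℂ) • A)) := by
  have h1 : ContDiff ℂ (N : WithTop ℕ∞) (NormedSpace.exp : Matrix (Fin n) (Fin n) ℂ → _) :=
    contDiff_iff_contDiffAt.2 fun x => (NormedSpace.exp_analytic x).contDiffAt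
  have h2 : ContDiff ℂ (N : WithTop ℕ∞) (fun z : ℂ => z • A) := contDiff_id.smul contDiff_const
  exact ((h1.comp h2).restrict_scalars ℝ).comp Complex.ofRealCLM.contDiff

private lemma kannai_exp_iteratedDeriv (A : Matrix (Fin n) (Fin n) ℂ) (j : ℕ) (s : ℝ) :
    iteratedDeriv j (fun s : ℝ => NormedSpace.exp ((s : ℂ) • A)) s
      = A ^ j * NormedSpace.exp ((s : ℂ) • A) := by
  induction j generalizing s with
  | zero => simp
  | succ j ih =>
    rw [iteratedDeriv_succ]
    have hfun : iteratedDeriv j (fun s : ℝ => NormedSpace.exp ((s : ℂ) • A))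
        = fun s : ℝ => A ^ j * NormedSpace.exp ((s : ℂ) • A) := funext fun t => ih t
    rw [hfun]
    have hE : HasDerivAt (fun t : ℝ => NormedSpace.exp ((t : ℂ) • A))
        (A * NormedSpace.exp ((s : ℂ) • A)) s := by
      have h := HasDerivAt.scomp (x := s)
        (hasDerivAt_exp_smul_const' (𝕂 := ℂ) A ((s : ℝ) : ℂ)) Complex.ofRealCLM.hasDerivAt
      simp at h; exact h
    rw [(hE.const_mul (A ^ j)).deriv, ← mul_assoc, ← pow_succ]

end MatrixAux

/-- Bound on the `2Q`-th derivative of `F(s) = κ_T(s) e^{-isH}`: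
`‖F^{(2Q)}(s)‖ ≤ (√((4Q)!)/√T) (‖H‖ + 1/√(2T))^{2Q}`, where `‖·‖` is the
operator norm induced by the Euclidean norm. -/
theorem kannai_wave_product_deriv_bound
    (n : ℕ) (hn : 0 < n) (H : Matrix (Fin n) (Fin n) ℂ) (hH : H.IsHermitian)
    (T : ℝ) (hT : 0 < T) (Q : ℕ) (hQ : 1 ≤ Q) (s : ℝ) :
    ‖iteratedDeriv (2 * Q)
        (fun s : ℝ => ((Real.sqrt (4 * Real.pi * T))⁻¹ * Real.exp (-s ^ 2 / (4 * T))) •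
          NormedSpace.exp (-(Complex.I * (s : ℂ)) • H)) s‖ ≤
      (Real.sqrt (Nat.factorial (4 * Q)) / Real.sqrt T) *
        (‖H‖ + 1 / Real.sqrt (2 * T)) ^ (2 * Q) := by
  haveI : Nonempty (Fin n) := ⟨⟨0, hn⟩⟩
  haveI : Nontrivial (Matrix (Fin n) (Fin n) ℂ) := by
    refine ⟨0, 1, fun h => ?_⟩
    have := congrFun (congrFun h ⟨0, hn⟩) ⟨0, hn⟩
    simp [Matrix.one_apply_eq] at this
  have hπ := Real.pi_pos
  set m := 2 * Q with hm
  set A : Matrix (Fin n) (Fin n) ℂ := (-Complex.I) • H with hA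
  have funeq : (fun s : ℝ => ((Real.sqrt (4 * Real.pi * T))⁻¹ * Real.exp (-s ^ 2 / (4 * T))) •
        NormedSpace.exp (-(Complex.I * (s : ℂ)) • H))
      = fun t : ℝ => ((Real.sqrt (4 * Real.pi * T))⁻¹ * Real.exp (-t ^ 2 / (4 * T))) •
        NormedSpace.exp ((t : ℂ) • A) := by
    funext t
    have h : -(Complex.I * (t : ℂ)) • H = (t : ℂ) • A := by
      rw [hA, smul_smul]
      congr 1
      ring
    rw [h]
  rw [funeq]
  have hgsmooth : ContDiff ℝ (m : WithTop ℕ∞)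
      (fun t : ℝ => (Real.sqrt (4 * Real.pi * T))⁻¹ * Real.exp (-t ^ 2 / (4 * T))) :=
    contDiff_const.mul (((contDiff_id.pow 2).neg.div_const _).exp)
  have hEsmooth := kannai_exp_contDiff A m
  have hAnorm : ‖A‖ = ‖H‖ := by
    rw [hA, norm_smul]
    simp
  rw [← norm_iteratedFDeriv_eq_norm_iteratedDeriv]
  refine le_trans (norm_iteratedFDeriv_smul_le hgsmooth hEsmooth s le_rfl) ?_
  have hterm : ∀ i ∈ Finset.range (m+1),
      (m.choose i : ℝ) *
          ‖iteratedFDeriv ℝ i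
            (fun t : ℝ => (Real.sqrt (4 * Real.pi * T))⁻¹ * Real.exp (-t ^ 2 / (4 * T))) s‖ *
          ‖iteratedFDeriv ℝ (m-i) (fun t : ℝ => NormedSpace.exp ((t : ℂ) • A)) s‖ ≤
        (Real.sqrt (Nat.factorial (4 * Q)) / Real.sqrt T) *
          ((1 / Real.sqrt (2 * T)) ^ i * ‖H‖ ^ (m - i) * (m.choose i : ℝ)) := by
    intro i hi
    have hi' : i ≤ 2*Q := by
      have := Nat.lt_succ_iff.mp (Finset.mem_range.mp hi)
      omega
    have hg_i : ‖iteratedFDeriv ℝ i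
        (fun t : ℝ => (Real.sqrt (4 * Real.pi * T))⁻¹ * Real.exp (-t ^ 2 / (4 * T))) s‖ ≤
        Real.sqrt (Nat.factorial (4 * Q)) / Real.sqrt T * (1 / Real.sqrt (2 * T)) ^ i := by
      rw [norm_iteratedFDeriv_eq_norm_iteratedDeriv]
      exact le_trans (kannai_gauss_deriv_bound hT i s) (kannai_arith hT hQ hi')
    have hE_i : ‖iteratedFDeriv ℝ (m-i) (fun t : ℝ => NormedSpace.exp ((t : ℂ) • A)) s‖ ≤
        ‖H‖ ^ (m - i) := by
      rw [norm_iteratedFDeriv_eq_norm_iteratedDeriv, kannai_exp_iteratedDeriv]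
      calc ‖A ^ (m-i) * NormedSpace.exp ((s : ℂ) • A)‖
          ≤ ‖A ^ (m-i)‖ * ‖NormedSpace.exp ((s : ℂ) • A)‖ := norm_mul_le _ _
        _ = ‖A ^ (m-i)‖ := by
            rw [hA, kannai_exp_norm_one hn H hH s, mul_one]
        _ ≤ ‖A‖ ^ (m-i) := norm_pow_le _ _
        _ = ‖H‖ ^ (m-i) := by rw [hAnorm]
    calc (m.choose i : ℝ) *
          ‖iteratedFDeriv ℝ i
            (fun t : ℝ => (Real.sqrt (4 * Real.pi * T))⁻¹ * Real.exp (-t ^ 2 / (4 * T))) s‖ *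
          ‖iteratedFDeriv ℝ (m-i) (fun t : ℝ => NormedSpace.exp ((t : ℂ) • A)) s‖
        ≤ (m.choose i : ℝ) *
            (Real.sqrt (Nat.factorial (4 * Q)) / Real.sqrt T * (1 / Real.sqrt (2 * T)) ^ i) *
            (‖H‖ ^ (m - i)) := by
          apply mul_le_mul
          · exact mul_le_mul_of_nonneg_left hg_i (by positivity)
          · exact hE_i
          · exact norm_nonneg _
          · positivity
      _ = (Real.sqrt (Nat.factorial (4 * Q)) / Real.sqrt T) *
            ((1 / Real.sqrt (2 * T)) ^ i * ‖H‖ ^ (m - i) * (m.choose i : ℝ)) := by ring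
  refine le_trans (Finset.sum_le_sum hterm) ?_
  rw [← Finset.mul_sum, ← add_pow]
  rw [add_comm (1 / Real.sqrt (2 * T)) ‖H‖]
end

section
/- Let n be a positive integer, let A be an n×n complex matrix, let d ≥ 3 be an integer, and let u₀ ∈ ℂⁿ. Suppose w : ℝ → ℂⁿ is twice continuously differentiable with w''(s) = −A·w(s) for all s, w(0) = u₀, and w'(0) = 0. Define u(t) := ∫_{−1}^{1} (1 − λ²)^{(d−3)/2} · w(λ·t) dλ. Then u is twice differentiable on ℝ \ {0}, and for every t ≠ 0, u''(t) + ((d−1)/t)·u'(t) = −A·u(t). -/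
open MeasureTheory Real Matrix

open intervalIntegral in
lemma epd_aux_hasDerivAt {E : Type*} [NormedAddCommGroup E] [NormedSpace ℝ E] [CompleteSpace E]
    (K : ℝ → ℝ) (hK : Continuous K) (f f' : ℝ → E) (hf' : Continuous f')
    (hder : ∀ s, HasDerivAt f (f' s) s) (t : ℝ) :
    HasDerivAt (fun x => ∫ l in (-1:ℝ)..1, K l • f (l * x))
      (∫ l in (-1:ℝ)..1, (l * K l) • f' (l * t)) t := by
  have hf : Continuous f := by
    have : Differentiable ℝ f := fun s => (hder s).differentiableAt
    exact this.continuous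
  have hG : Continuous (fun pa : ℝ × ℝ => (pa.1 * K pa.1) • f' (pa.1 * pa.2)) :=
    (continuous_fst.mul (hK.comp continuous_fst)).smul
      (hf'.comp (continuous_fst.mul continuous_snd))
  have hs : IsCompact ((Set.Icc (-1:ℝ) 1) ×ˢ Metric.closedBall t 1) :=
    isCompact_Icc.prod (isCompact_closedBall t 1)
  obtain ⟨C, hC⟩ := hs.exists_bound_of_continuousOn hG.continuousOn
  have key := intervalIntegral.hasDerivAt_integral_of_dominated_loc_of_deriv_le
    (F := fun x l => K l • f (l * x)) (F' := fun x l => (l * K l) • f' (l * x))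
    (x₀ := t) (a := (-1:ℝ)) (b := 1) (bound := fun _ => C) (s := Metric.ball t 1) (μ := volume)
    (Metric.ball_mem_nhds t one_pos)
    (Filter.Eventually.of_forall fun x =>
      ((hK.smul (hf.comp (continuous_id.mul continuous_const))).aestronglyMeasurable))
    ((hK.smul (hf.comp (continuous_id.mul continuous_const))).intervalIntegrable _ _)
    (((continuous_id.mul hK).smul (hf'.comp (continuous_id.mul continuous_const))).aestronglyMeasurable)
    (Filter.Eventually.of_forall fun l hl x hx => by
      have hl' : l ∈ Set.Icc (-1:ℝ) 1 := by
        rw [Set.uIoc_of_le (by norm_num : (-1:ℝ) ≤ 1)] at hl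
        exact Set.Ioc_subset_Icc_self hl
      exact hC (l, x) ⟨hl', Metric.ball_subset_closedBall hx⟩)
    intervalIntegrable_const
    (Filter.Eventually.of_forall fun l _ x _ => by
      have h1 : HasDerivAt (fun y : ℝ => l * y) (l * 1) x := (hasDerivAt_id x).const_mul l
      have h2 : HasDerivAt (fun y : ℝ => f (l * y)) ((l * 1) • f' (l * x)) x :=
        (hder (l * x)).scomp x h1
      have h3 : HasDerivAt (fun y : ℝ => K l • f (l * y)) (K l • ((l * 1) • f' (l * x))) x :=
        h2.const_smul (K l)
      simpa [smul_smul, mul_comm, mul_assoc, mul_left_comm] using h3)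
  exact key.2

/-- Euler–Poisson–Darboux transmutation: the spherical-means average
`u(t) = ∫_{-1}^1 (1-λ²)^{(d-3)/2} w(λt) dλ` of a solution of the abstract wave
equation `w'' = -Aw`, `w(0) = u₀`, `w'(0) = 0` satisfies the
Euler–Poisson–Darboux equation `u'' + ((d-1)/t) u' = -Au` away from `t = 0`. -/
theorem euler_poisson_darboux_transmutation
    (n : ℕ) (hn : 0 < n) (A : Matrix (Fin n) (Fin n) ℂ)
    (d : ℕ) (hd : 3 ≤ d) (u₀ : Fin n → ℂ)
    (w : ℝ → Fin n → ℂ) (hw : ContDiff ℝ 2 w)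
    (hw'' : ∀ s : ℝ, deriv (deriv w) s = -(A.mulVec (w s)))
    (hw0 : w 0 = u₀) (hw'0 : deriv w 0 = 0)
    (u : ℝ → Fin n → ℂ)
    (hu : u = fun t : ℝ =>
      ∫ lam in (-1 : ℝ)..1, ((1 - lam ^ 2) ^ (((d : ℝ) - 3) / 2) : ℝ) • w (lam * t)) :
    ∀ t : ℝ, t ≠ 0 →
      DifferentiableAt ℝ u t ∧ DifferentiableAt ℝ (deriv u) t ∧
        deriv (deriv u) t + (((d : ℝ) - 1) / t) • deriv u t = -(A.mulVec (u t)) := by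
  have hd3 : (3:ℝ) ≤ (d:ℝ) := by exact_mod_cast hd
  have hp0 : (0:ℝ) ≤ ((d:ℝ) - 3) / 2 := by linarith
  have hq1 : (1:ℝ) ≤ ((d:ℝ) - 1) / 2 := by linarith
  have hq0 : (0:ℝ) ≤ ((d:ℝ) - 1) / 2 := by linarith
  have hqne : ((d:ℝ) - 1) / 2 ≠ 0 := by positivity
  set K : ℝ → ℝ := fun l => (1 - l ^ 2) ^ (((d:ℝ) - 3) / 2) with hKdef
  set Q : ℝ → ℝ := fun l => (1 - l ^ 2) ^ (((d:ℝ) - 1) / 2) with hQdef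
  have hKcont : Continuous K := by
    rw [continuous_iff_continuousAt]; intro l
    exact (Real.continuousAt_rpow_const _ _ (Or.inr hp0)).comp
      ((continuous_const.sub (continuous_pow 2)).continuousAt)
  have hQcont : Continuous Q := by
    rw [continuous_iff_continuousAt]; intro l
    exact (Real.continuousAt_rpow_const _ _ (Or.inr hq0)).comp
      ((continuous_const.sub (continuous_pow 2)).continuousAt)
  have hw2 : Differentiable ℝ w ∧ ContDiff ℝ 1 (deriv w) := by
    have h := contDiff_succ_iff_deriv.mp (show ContDiff ℝ (1 + 1) w by exact_mod_cast hw)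
    exact ⟨h.1, h.2.2⟩
  have hw1 : Differentiable ℝ (deriv w) ∧ Continuous (deriv (deriv w)) :=
    contDiff_one_iff_deriv.mp hw2.2
  have hdw : ∀ s, HasDerivAt w (deriv w s) s := fun s => (hw2.1 s).hasDerivAt
  have hdw' : ∀ s, HasDerivAt (deriv w) (deriv (deriv w) s) s := fun s => (hw1.1 s).hasDerivAt
  have cw : Continuous w := hw.continuous
  have cw' : Continuous (deriv w) := hw2.2.continuous
  have cw'' : Continuous (deriv (deriv w)) := hw1.2
  set g : ℝ → Fin n → ℂ := fun t => ∫ l in (-1:ℝ)..1, (l * K l) • deriv w (l * t) with hgdef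
  set h : ℝ → Fin n → ℂ :=
    fun t => ∫ l in (-1:ℝ)..1, (l * (l * K l)) • deriv (deriv w) (l * t) with hhdef
  have hug : ∀ t, HasDerivAt u (g t) t := by
    intro t; rw [hu]
    exact epd_aux_hasDerivAt K hKcont w (deriv w) cw' hdw t
  have hderivu : deriv u = g := funext fun t => (hug t).deriv
  have hgh : ∀ t, HasDerivAt g (h t) t := fun t =>
    epd_aux_hasDerivAt (fun l => l * K l) (continuous_id.mul hKcont)
      (deriv w) (deriv (deriv w)) cw'' hdw' t
  intro t ht
  refine ⟨(hug t).differentiableAt, ?_, ?_⟩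
  · rw [hderivu]; exact (hgh t).differentiableAt
  rw [hderivu, (hgh t).deriv]
  -- IBP setup
  have hUq : ∀ l : ℝ, HasDerivAt Q (((d:ℝ) - 1) / 2 * K l * (-(2 * l))) l := by
    intro l
    have hinner : HasDerivAt (fun l : ℝ => 1 - l ^ 2) (-(2 * l)) l := by
      simpa using (hasDerivAt_pow 2 l).const_sub 1
    have houter := Real.hasDerivAt_rpow_const (x := 1 - l ^ 2) (p := ((d:ℝ) - 1) / 2)
      (Or.inr hq1)
    have hcomp := houter.comp l hinner
    have hexp : ((d:ℝ) - 1) / 2 - 1 = ((d:ℝ) - 3) / 2 := by ring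
    rw [hexp] at hcomp
    exact hcomp
  have hV : ∀ l : ℝ, HasDerivAt (fun l : ℝ => deriv w (l * t))
      (t • deriv (deriv w) (l * t)) l := by
    intro l
    have h1 : HasDerivAt (fun y : ℝ => y * t) (1 * t) l := (hasDerivAt_id l).mul_const t
    have h2 := (hdw' (l * t)).scomp l h1
    simpa [Function.comp_def] using h2
  have hP : ∀ l : ℝ, HasDerivAt (fun l => Q l • deriv w (l * t))
      (Q l • (t • deriv (deriv w) (l * t))
        + (((d:ℝ) - 1) / 2 * K l * (-(2 * l))) • deriv w (l * t)) l :=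
    fun l => (hUq l).smul (hV l)
  have hint1 : IntervalIntegrable
      (fun l : ℝ => (((d:ℝ) - 1) / 2 * K l * (-(2 * l))) • deriv w (l * t)) volume (-1) 1 :=
    (((continuous_const.mul hKcont).mul (continuous_const.mul continuous_id).neg).smul
      (cw'.comp (continuous_id.mul continuous_const))).intervalIntegrable _ _
  have hint2 : IntervalIntegrable
      (fun l : ℝ => Q l • (t • deriv (deriv w) (l * t))) volume (-1) 1 :=
    (by fun_prop : Continuous (fun l : ℝ => Q l • (t • deriv (deriv w) (l * t)))).intervalIntegrable _ _
  have hQ1 : Q (1:ℝ) = 0 := by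
    simp only [hQdef]; norm_num [Real.zero_rpow hqne]
  have hQm1 : Q (-1:ℝ) = 0 := by
    simp only [hQdef]; norm_num [Real.zero_rpow hqne]
  have hFTC : (∫ l in (-1:ℝ)..1,
      (Q l • (t • deriv (deriv w) (l * t))
        + (((d:ℝ) - 1) / 2 * K l * (-(2 * l))) • deriv w (l * t))) = 0 := by
    rw [intervalIntegral.integral_eq_sub_of_hasDerivAt (fun l _ => hP l) (hint2.add hint1)]
    rw [hQ1, hQm1]
    simp
  rw [intervalIntegral.integral_add hint2 hint1] at hFTC
  -- rewrite first integral as -(d-1) • g t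
  have hI1 : (∫ l in (-1:ℝ)..1, (((d:ℝ) - 1) / 2 * K l * (-(2 * l))) • deriv w (l * t))
      = (-((d:ℝ) - 1)) • g t := by
    rw [hgdef]
    rw [← intervalIntegral.integral_smul]
    apply intervalIntegral.integral_congr
    intro l _
    dsimp only
    rw [smul_smul]
    congr 1
    ring
  -- rewrite second integral
  set M : Fin n → ℂ := ∫ l in (-1:ℝ)..1, Q l • deriv (deriv w) (l * t) with hMdef
  have hMint : IntervalIntegrable (fun l : ℝ => Q l • deriv (deriv w) (l * t)) volume (-1) 1 :=
    (hQcont.smul (cw''.comp (continuous_id.mul continuous_const))).intervalIntegrable _ _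
  have hI2 : (∫ l in (-1:ℝ)..1, Q l • (t • deriv (deriv w) (l * t))) = t • M := by
    rw [hMdef, ← intervalIntegral.integral_smul]
    apply intervalIntegral.integral_congr
    intro l _
    dsimp only
    rw [smul_comm]
  rw [hI1, hI2] at hFTC
  -- hFTC : (-((d:ℝ)-1)) • g t + t • M = 0
  have hgM : (((d:ℝ) - 1) / t) • g t = M := by
    have h1 : ((d:ℝ) - 1) • g t = t • M := by
      have h0 := hFTC
      rw [neg_smul, add_neg_eq_zero] at h0
      exact h0.symm
    have h2 : (((d:ℝ) - 1) / t) • g t = (t⁻¹ * ((d:ℝ) - 1)) • g t := by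
      congr 1; field_simp
    rw [h2, mul_smul, h1, smul_smul, _root_.inv_mul_cancel₀ ht, one_smul]
  rw [hgM]
  -- h t + M = ∫ K l • w''(l t)
  have hinth : IntervalIntegrable
      (fun l : ℝ => (l * (l * K l)) • deriv (deriv w) (l * t)) volume (-1) 1 :=
    ((continuous_id.mul (continuous_id.mul hKcont)).smul
      (cw''.comp (continuous_id.mul continuous_const))).intervalIntegrable _ _
  have hsum : h t + M = ∫ l in (-1:ℝ)..1, K l • deriv (deriv w) (l * t) := by
    rw [hhdef, hMdef, ← intervalIntegral.integral_add hinth hMint]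
    apply intervalIntegral.integral_congr
    intro l hl
    dsimp only
    rw [← add_smul]
    congr 1
    have hx : 0 ≤ 1 - l ^ 2 := by
      rw [Set.uIcc_of_le (by norm_num : (-1:ℝ) ≤ 1)] at hl
      nlinarith [hl.1, hl.2]
    have hQK : Q l = (1 - l ^ 2) * K l := by
      rcases eq_or_lt_of_le hx with hx0 | hxpos
      · rw [hQdef, hKdef]
        simp only
        rw [← hx0, Real.zero_rpow hqne, zero_mul]
      · rw [hQdef, hKdef]
        simp only
        have : ((d:ℝ) - 1) / 2 = 1 + ((d:ℝ) - 3) / 2 := by ring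
        rw [this, Real.rpow_add hxpos, Real.rpow_one]
    rw [hQK]; ring
  rw [hsum]
  -- final: use w'' = -A w and pull A out
  have hrw : (∫ l in (-1:ℝ)..1, K l • deriv (deriv w) (l * t))
      = ∫ l in (-1:ℝ)..1, K l • (-(A.mulVec (w (l * t)))) := by
    apply intervalIntegral.integral_congr
    intro l _
    dsimp only
    rw [hw'']
  rw [hrw]
  set L : (Fin n → ℂ) →L[ℂ] (Fin n → ℂ) :=
    LinearMap.toContinuousLinearMap (Matrix.mulVecLin A) with hLdef
  have hL : ∀ v : Fin n → ℂ, L v = A.mulVec v := fun v => rfl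
  have hwint : IntervalIntegrable (fun l : ℝ => K l • w (l * t)) volume (-1) 1 :=
    (hKcont.smul (cw.comp (continuous_id.mul continuous_const))).intervalIntegrable _ _
  have hfin : (∫ l in (-1:ℝ)..1, K l • (-(A.mulVec (w (l * t)))))
      = -(A.mulVec (∫ l in (-1:ℝ)..1, K l • w (l * t))) := by
    rw [← hL, ← L.intervalIntegral_comp_comm hwint, ← intervalIntegral.integral_neg]
    apply intervalIntegral.integral_congr
    intro l _
    dsimp only
    rw [L.map_smul_of_tower, hL, smul_neg]
  rw [hfin, hu]
end
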